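/- arXiv:2011.06530 — 5 statements merged into one kernel-verified Lean document; each statement's English description precedes it below -/
import Mathlib

section
/- Let G = (V, E) be a hypergraph and x, x̃ ∈ ℝ^V two vectors such that |x_v − x̃_v| ≤ δ for every v ∈ V, for some δ ≥ 0. Then for every hyperedge e ∈ E, |Q_x(e) − Q_{x̃}(e)| ≤ 4δ(√(Q_x(e)) + δ), where Q_x(e) = max_{a,b ∈ e} (x_a − x_b)². -/
/-- Perturbing a vector by at most `δ` in each coordinate changes the energy of a
hyperedge by at most `4δ(√(Q_x(e)) + δ)`. -/
theorem stmt_1 {V : Type*} (e : Finset V) (he : e.Nonempty) (x xt : V → ℝ)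
    (δ : ℝ) (hδ : 0 ≤ δ) (h : ∀ v : V, |x v - xt v| ≤ δ) :
    |e.sup' he (fun a => e.sup' he fun b => (x a - x b) ^ 2) -
        e.sup' he (fun a => e.sup' he fun b => (xt a - xt b) ^ 2)| ≤
      4 * δ * (Real.sqrt (e.sup' he (fun a => e.sup' he fun b => (x a - x b) ^ 2)) + δ) := by
  set Qx := e.sup' he (fun a => e.sup' he fun b => (x a - x b) ^ 2) with hQx
  set Qt := e.sup' he (fun a => e.sup' he fun b => (xt a - xt b) ^ 2) with hQt
  obtain ⟨v, hv⟩ := id he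
  have hQx0 : 0 ≤ Qx := by
    have h1 : (x v - x v) ^ 2 ≤ e.sup' he fun b => (x v - x b) ^ 2 :=
      Finset.le_sup' (fun b => (x v - x b) ^ 2) hv
    have h2 : (e.sup' he fun b => (x v - x b) ^ 2) ≤ Qx :=
      Finset.le_sup' (fun a => e.sup' he fun b => (x a - x b) ^ 2) hv
    nlinarith
  have hQt0 : 0 ≤ Qt := by
    have h1 : (xt v - xt v) ^ 2 ≤ e.sup' he fun b => (xt v - xt b) ^ 2 :=
      Finset.le_sup' (fun b => (xt v - xt b) ^ 2) hv
    have h2 : (e.sup' he fun b => (xt v - xt b) ^ 2) ≤ Qt :=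
      Finset.le_sup' (fun a => e.sup' he fun b => (xt a - xt b) ^ 2) hv
    nlinarith
  set A := Real.sqrt Qx with hA
  set B := Real.sqrt Qt with hB
  have hA0 : 0 ≤ A := Real.sqrt_nonneg _
  have hB0 : 0 ≤ B := Real.sqrt_nonneg _
  have hAsq : A ^ 2 = Qx := Real.sq_sqrt hQx0
  have hBsq : B ^ 2 = Qt := Real.sq_sqrt hQt0
  -- bounds on pairwise differences
  have hxA : ∀ a ∈ e, ∀ b ∈ e, |x a - x b| ≤ A := by
    intro a ha b hb
    have h1 : (x a - x b) ^ 2 ≤ Qx := by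
      have h2 : (x a - x b) ^ 2 ≤ e.sup' he fun c => (x a - x c) ^ 2 :=
        Finset.le_sup' (fun c => (x a - x c) ^ 2) hb
      have h3 : (e.sup' he fun c => (x a - x c) ^ 2) ≤ Qx :=
        Finset.le_sup' (fun a => e.sup' he fun b => (x a - x b) ^ 2) ha
      linarith
    have := Real.sqrt_le_sqrt h1
    rwa [Real.sqrt_sq_eq_abs] at this
  have hxB : ∀ a ∈ e, ∀ b ∈ e, |xt a - xt b| ≤ B := by
    intro a ha b hb
    have h1 : (xt a - xt b) ^ 2 ≤ Qt := by
      have h2 : (xt a - xt b) ^ 2 ≤ e.sup' he fun c => (xt a - xt c) ^ 2 :=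
        Finset.le_sup' (fun c => (xt a - xt c) ^ 2) hb
      have h3 : (e.sup' he fun c => (xt a - xt c) ^ 2) ≤ Qt :=
        Finset.le_sup' (fun a => e.sup' he fun b => (xt a - xt b) ^ 2) ha
      linarith
    have := Real.sqrt_le_sqrt h1
    rwa [Real.sqrt_sq_eq_abs] at this
  -- Qt ≤ (A + 2δ)^2
  have hQtle : Qt ≤ (A + 2 * δ) ^ 2 := by
    apply Finset.sup'_le
    intro a ha
    apply Finset.sup'_le
    intro b hb
    have h1 := h a
    have h2 := h b
    have h3 := hxA a ha b hb
    have h4 : |xt a - xt b| ≤ A + 2 * δ := by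
      have := abs_sub_abs_le_abs_sub (xt a - xt b) (x a - x b)
      have h5 : |xt a - xt b - (x a - x b)| ≤ 2 * δ := by
        have : xt a - xt b - (x a - x b) = -(x a - xt a) + (x b - xt b) := by ring
        rw [this]
        calc |-(x a - xt a) + (x b - xt b)| ≤ |-(x a - xt a)| + |x b - xt b| :=
              abs_add_le _ _
          _ ≤ δ + δ := by rw [abs_neg]; exact add_le_add h1 h2
          _ = 2 * δ := by ring
      linarith
    have h6 : 0 ≤ |xt a - xt b| := abs_nonneg _
    nlinarith [sq_abs (xt a - xt b)]
  have hQxle : Qx ≤ (B + 2 * δ) ^ 2 := by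
    apply Finset.sup'_le
    intro a ha
    apply Finset.sup'_le
    intro b hb
    have h1 := h a
    have h2 := h b
    have h3 := hxB a ha b hb
    have h4 : |x a - x b| ≤ B + 2 * δ := by
      have := abs_sub_abs_le_abs_sub (x a - x b) (xt a - xt b)
      have h5 : |x a - x b - (xt a - xt b)| ≤ 2 * δ := by
        have : x a - x b - (xt a - xt b) = (x a - xt a) - (x b - xt b) := by ring
        rw [this]
        calc |(x a - xt a) - (x b - xt b)| ≤ |x a - xt a| + |x b - xt b| :=
              abs_sub _ _
          _ ≤ δ + δ := add_le_add h1 h2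
          _ = 2 * δ := by ring
      linarith
    have h6 : 0 ≤ |x a - x b| := abs_nonneg _
    nlinarith [sq_abs (x a - x b)]
  -- B ≤ A + 2δ and A ≤ B + 2δ
  have hBA : B ≤ A + 2 * δ := by
    have := Real.sqrt_le_sqrt hQtle
    rwa [Real.sqrt_sq (by linarith)] at this
  have hAB : A ≤ B + 2 * δ := by
    have := Real.sqrt_le_sqrt hQxle
    rwa [Real.sqrt_sq (by linarith)] at this
  rw [← hAsq, ← hBsq, abs_le]
  constructor <;> nlinarith
end

section
/- Let G = (V, E) be an r-uniform hypergraph with expansion at least Φ where Φ ≤ 2/r. Then for every vector x ∈ ℝ^V with Σ_{v∈V} x_v d(v) = 0, the energy satisfies Q(x) ≥ (rΦ²/32) · Σ_{v∈V} x_v² d(v). -/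
open scoped Classical
set_option maxHeartbeats 1000000


noncomputable def msup {V : Type*} [DecidableEq V] (z : V → ℝ) (e : Multiset V) : ℝ :=
  if h : e.toFinset.Nonempty then e.toFinset.sup' h z else 0

noncomputable def minf {V : Type*} [DecidableEq V] (z : V → ℝ) (e : Multiset V) : ℝ :=
  if h : e.toFinset.Nonempty then e.toFinset.inf' h z else 0

lemma msup_eq {V : Type*} [DecidableEq V] (z : V → ℝ) (e : Multiset V)
    (h : e.toFinset.Nonempty) : msup z e = e.toFinset.sup' h z := by simp [msup, h]

lemma minf_eq {V : Type*} [DecidableEq V] (z : V → ℝ) (e : Multiset V)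
    (h : e.toFinset.Nonempty) : minf z e = e.toFinset.inf' h z := by simp [minf, h]

lemma minf_le {V : Type*} [DecidableEq V] (z : V → ℝ) {e : Multiset V} {a : V}
    (ha : a ∈ e) : minf z e ≤ z a := by
  have h : e.toFinset.Nonempty := ⟨a, Multiset.mem_toFinset.2 ha⟩
  rw [minf_eq z e h]
  exact Finset.inf'_le _ (Multiset.mem_toFinset.2 ha)

lemma le_msup {V : Type*} [DecidableEq V] (z : V → ℝ) {e : Multiset V} {a : V}
    (ha : a ∈ e) : z a ≤ msup z e := by
  have h : e.toFinset.Nonempty := ⟨a, Multiset.mem_toFinset.2 ha⟩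
  rw [msup_eq z e h]
  exact Finset.le_sup' _ (Multiset.mem_toFinset.2 ha)

lemma exists_msup {V : Type*} [DecidableEq V] (z : V → ℝ) {e : Multiset V}
    (h : e.toFinset.Nonempty) : ∃ a ∈ e, msup z e = z a := by
  obtain ⟨a, ha, hEq⟩ := Finset.exists_mem_eq_sup' h z
  exact ⟨a, Multiset.mem_toFinset.1 ha, by rw [msup_eq z e h, hEq]⟩

lemma exists_minf {V : Type*} [DecidableEq V] (z : V → ℝ) {e : Multiset V}
    (h : e.toFinset.Nonempty) : ∃ a ∈ e, minf z e = z a := by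
  obtain ⟨a, ha, hEq⟩ := Finset.exists_mem_eq_inf' h z
  exact ⟨a, Multiset.mem_toFinset.1 ha, by rw [minf_eq z e h, hEq]⟩

lemma minf_le_msup {V : Type*} [DecidableEq V] (z : V → ℝ) {e : Multiset V}
    (h : e.toFinset.Nonempty) : minf z e ≤ msup z e := by
  obtain ⟨a, ha, hEq⟩ := exists_msup z h
  rw [hEq]; exact minf_le z ha

lemma sSup_pairs {V : Type*} [DecidableEq V] (x : V → ℝ) (e : Multiset V)
    (h : e.toFinset.Nonempty) :
    sSup {y : ℝ | ∃ a ∈ e, ∃ b ∈ e, y = (x a - x b) ^ 2} = (msup x e - minf x e) ^ 2 := by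
  apply IsGreatest.csSup_eq
  constructor
  · obtain ⟨a, ha, hA⟩ := exists_msup x h
    obtain ⟨b, hb, hB⟩ := exists_minf x h
    exact ⟨a, ha, b, hb, by rw [hA, hB]⟩
  · rintro y ⟨a, ha, b, hb, rfl⟩
    have h1 : x a ≤ msup x e := le_msup x ha
    have h2 : minf x e ≤ x b := minf_le x hb
    have h3 : minf x e ≤ x a := minf_le x ha
    have h4 : x b ≤ msup x e := le_msup x hb
    apply sq_le_sq' <;> linarith

lemma card_filter_eq_sum {α : Type*} (s : Multiset α) (p : α → Prop) [DecidablePred p] :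
    ((s.filter p).card : ℝ) = (s.map fun a => if p a then (1:ℝ) else 0).sum := by
  induction s using Multiset.induction with
  | empty => simp
  | cons a s ih =>
    by_cases h : p a <;> simp [Multiset.filter_cons, h, ← ih] <;> ring

lemma sum_map_finsum {α V : Type*} [Fintype V] (s : Multiset α) (f : α → V → ℝ) :
    (s.map fun a => ∑ v, f a v).sum = ∑ v, (s.map fun a => f a v).sum := by
  induction s using Multiset.induction with
  | empty => simp
  | cons a s ih => simp [ih, Finset.sum_add_distrib]

lemma sum_map_natcast {α : Type*} (s : Multiset α) (g : α → ℕ) :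
    ((s.map g).sum : ℝ) = (s.map fun a => (g a : ℝ)).sum := by
  induction s using Multiset.induction with
  | empty => simp
  | cons a s ih => simp [ih]

lemma edge_sum_eq {V : Type*} [Fintype V] [DecidableEq V] (e : Multiset V) (f : V → ℝ) :
    (e.map f).sum = ∑ v, (e.count v : ℝ) * f v := by
  rw [Finset.sum_multiset_map_count]
  rw [Finset.sum_subset (Finset.subset_univ e.toFinset)]
  · exact Finset.sum_congr rfl fun v _ => by simp [nsmul_eq_mul]
  · intro v _ hv
    simp [Multiset.count_eq_zero_of_notMem (by simpa using hv)]

lemma deg_sum {V : Type*} [Fintype V] [DecidableEq V] (E : Multiset (Multiset V))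
    (d : V → ℕ) (hd : ∀ v, d v = (E.map fun e => e.count v).sum) (f : V → ℝ) :
    (E.map fun e => (e.map f).sum).sum = ∑ v, f v * (d v : ℝ) := by
  have h1 : (E.map fun e => (e.map f).sum).sum
      = ∑ v, (E.map fun e => (e.count v : ℝ) * f v).sum := by
    rw [← sum_map_finsum]
    exact congrArg _ (Multiset.map_congr rfl fun e _ => edge_sum_eq e f)
  rw [h1]
  refine Finset.sum_congr rfl fun v _ => ?_
  rw [hd v, sum_map_natcast, ← Multiset.sum_map_mul_left]
  exact congrArg _ (Multiset.map_congr rfl fun e _ => (mul_comm _ _))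


lemma max_sub_max_le (p q : ℝ) : max p 0 - max q 0 ≤ max (p - q) 0 := by
  rcases le_total p 0 with h | h
  · have h1 := le_max_right q (0:ℝ)
    have h2 := le_max_right (p - q) (0:ℝ)
    rw [max_eq_right h]; linarith
  · rw [max_eq_left h]
    have h2 := le_max_left q (0:ℝ)
    have h3 := le_max_left (p - q) (0:ℝ)
    have h4 := le_max_right (p - q) (0:ℝ)
    rcases le_total q 0 with h' | h'
    · rw [max_eq_right h']; linarith
    · rw [max_eq_left h']; linarith

lemma median {V : Type*} [Fintype V] [Nonempty V] (d : V → ℝ) (hd0 : ∀ v, 0 ≤ d v)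
    (x : V → ℝ) :
    ∃ c : ℝ,
      (∑ v ∈ Finset.univ.filter (fun v => c < x v), d v ≤
        ∑ v ∈ Finset.univ.filter (fun v => x v ≤ c), d v) ∧
      (∑ v ∈ Finset.univ.filter (fun v => x v < c), d v ≤
        ∑ v ∈ Finset.univ.filter (fun v => c ≤ x v), d v) := by
  set vol := ∑ v, d v with hvol
  have hvol0 : 0 ≤ vol := Finset.sum_nonneg fun v _ => hd0 v
  set I := Finset.univ.image x with hI
  have hIne : I.Nonempty := Finset.univ_nonempty.image x
  set K := I.filter (fun t => vol ≤ 2 * ∑ v ∈ Finset.univ.filter (fun v => x v ≤ t), d v)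
    with hK
  have hKne : K.Nonempty := by
    refine ⟨I.max' hIne, Finset.mem_filter.2 ⟨I.max'_mem hIne, ?_⟩⟩
    have hfil : Finset.univ.filter (fun v => x v ≤ I.max' hIne) = Finset.univ :=
      Finset.filter_true_of_mem fun v _ =>
        I.le_max' _ (Finset.mem_image_of_mem x (Finset.mem_univ v))
    rw [hfil]
    linarith [hvol0]
  set c := K.min' hKne with hc
  have hcK := K.min'_mem hKne
  have hc1 : vol ≤ 2 * ∑ v ∈ Finset.univ.filter (fun v => x v ≤ c), d v :=
    (Finset.mem_filter.mp hcK).2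
  have hcompl1 : ∑ v ∈ Finset.univ.filter (fun v => x v ≤ c), d v +
      ∑ v ∈ Finset.univ.filter (fun v => c < x v), d v = vol := by
    have hfil : Finset.univ.filter (fun v => c < x v) =
        Finset.univ.filter (fun v => ¬ x v ≤ c) :=
      Finset.filter_congr fun v _ => not_le.symm
    rw [hvol, hfil, Finset.sum_filter_add_sum_filter_not Finset.univ (fun v => x v ≤ c) d]
  have hcompl2 : ∑ v ∈ Finset.univ.filter (fun v => x v < c), d v +
      ∑ v ∈ Finset.univ.filter (fun v => c ≤ x v), d v = vol := by
    have hfil : Finset.univ.filter (fun v => c ≤ x v) =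
        Finset.univ.filter (fun v => ¬ x v < c) :=
      Finset.filter_congr fun v _ => not_lt.symm
    rw [hvol, hfil, Finset.sum_filter_add_sum_filter_not Finset.univ (fun v => x v < c) d]
  refine ⟨c, by linarith, ?_⟩
  by_cases hne : (Finset.univ.filter (fun v => x v < c)).Nonempty
  · set F := Finset.univ.filter (fun v => x v < c) with hF
    obtain ⟨w, hw, hwEq⟩ := Finset.exists_mem_eq_sup' hne x
    set c' := F.sup' hne x with hc'
    have hc'c : c' < c := by rw [hwEq]; exact (Finset.mem_filter.mp hw).2
    have hc'I : c' ∈ I := by rw [hwEq]; exact Finset.mem_image_of_mem x (Finset.mem_univ w)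
    have hc'K : c' ∉ K := fun hmem => absurd (K.min'_le c' hmem) (not_le.2 hc'c)
    have h2 : ¬ (vol ≤ 2 * ∑ v ∈ Finset.univ.filter (fun v => x v ≤ c'), d v) := by
      intro h
      exact hc'K (Finset.mem_filter.2 ⟨hc'I, h⟩)
    push_neg at h2
    have hsub : F ⊆ Finset.univ.filter (fun v => x v ≤ c') := by
      intro v hv
      exact Finset.mem_filter.2 ⟨Finset.mem_univ v, Finset.le_sup' x hv⟩
    have h3 : ∑ v ∈ F, d v ≤ ∑ v ∈ Finset.univ.filter (fun v => x v ≤ c'), d v :=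
      Finset.sum_le_sum_of_subset_of_nonneg hsub fun v _ _ => hd0 v
    rw [hF] at h3
    linarith
  · rw [Finset.not_nonempty_iff_eq_empty] at hne
    rw [hne, Finset.sum_empty]
    exact Finset.sum_nonneg fun v _ => hd0 v

lemma rhs_nonneg {V : Type*} [Fintype V] [DecidableEq V] (E : Multiset (Multiset V)) (hE : ∀ e ∈ E, e.toFinset.Nonempty)
    (z : V → ℝ) (hz0 : ∀ v, 0 ≤ z v) :
    0 ≤ (E.map fun e => (msup z e) ^ 2 - (minf z e) ^ 2).sum := by
  apply Multiset.sum_nonneg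
  intro y hy
  obtain ⟨e, he, rfl⟩ := Multiset.mem_map.1 hy
  have hne := hE e he
  obtain ⟨a, ha, hEq⟩ := exists_minf z hne
  have h0 : 0 ≤ minf z e := hEq ▸ hz0 a
  obtain ⟨b, hb, hEq'⟩ := exists_msup z hne
  have h1 : minf z e ≤ msup z e := hEq' ▸ minf_le z hb
  nlinarith

lemma key {V : Type*} [Fintype V] [DecidableEq V] (E : Multiset (Multiset V)) (hE : ∀ e ∈ E, e.toFinset.Nonempty)
    (d : V → ℝ) (hd0 : ∀ v, 0 ≤ d v) (Φ : ℝ) (hΦ0 : 0 ≤ Φ)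
    (hexp : ∀ S : Finset V, S.Nonempty → S ≠ Finset.univ →
      Φ * min (∑ v ∈ S, d v) (∑ v ∈ Sᶜ, d v) ≤
        ((E.filter fun e => (∃ a ∈ e, a ∈ S) ∧ ∃ b ∈ e, b ∉ S).card : ℝ)) :
    ∀ n : ℕ, ∀ z : V → ℝ, (Finset.univ.image z).card ≤ n → (∀ v, 0 ≤ z v) →
    (∑ v ∈ Finset.univ.filter (fun v => z v ≠ 0), d v ≤
      ∑ v ∈ Finset.univ.filter (fun v => z v = 0), d v) →
    Φ * ∑ v, (z v) ^ 2 * d v ≤ (E.map fun e => (msup z e) ^ 2 - (minf z e) ^ 2).sum := by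
  intro n
  induction n with
  | zero =>
    intro z hcard hz0 _
    have himg : (Finset.univ.image z) = ∅ := Finset.card_eq_zero.mp (Nat.le_zero.mp hcard)
    have hempty : (Finset.univ : Finset V) = ∅ := Finset.image_eq_empty.mp himg
    have : ∑ v, (z v) ^ 2 * d v = 0 := by rw [hempty]; simp
    rw [this, mul_zero]
    exact rhs_nonneg E hE z hz0
  | succ n ih =>
    intro z hcard hz0 hsupp
    by_cases h1 : (Finset.univ.image z).card ≤ 1
    · -- z (essentially) constant: show LHS is zero
      have hz : ∑ v, (z v) ^ 2 * d v = 0 := by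
        rcases isEmpty_or_nonempty V with hV | hV
        · simp
        · obtain ⟨v₀⟩ := hV
          have hval : ∀ v, z v = z v₀ := fun v =>
            Finset.card_le_one.mp h1 _ (Finset.mem_image_of_mem z (Finset.mem_univ v))
              _ (Finset.mem_image_of_mem z (Finset.mem_univ v₀))
          by_cases h0 : z v₀ = 0
          · exact Finset.sum_eq_zero fun v _ => by rw [hval v, h0]; ring
          · have hfil : Finset.univ.filter (fun v => z v ≠ 0) = Finset.univ := by
              apply Finset.filter_true_of_mem; intro v _; rw [hval v]; exact h0
            have hfil2 : Finset.univ.filter (fun v => z v = 0) = ∅ := by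
              apply Finset.filter_false_of_mem; intro v _; rw [hval v]; exact h0
            rw [hfil, hfil2] at hsupp
            simp only [Finset.sum_empty] at hsupp
            have hdz : ∑ v, d v = 0 :=
              le_antisymm hsupp (Finset.sum_nonneg fun v _ => hd0 v)
            have hall : ∀ v ∈ Finset.univ, d v = 0 :=
              (Finset.sum_eq_zero_iff_of_nonneg fun v _ => hd0 v).mp hdz
            exact Finset.sum_eq_zero fun v hv => by rw [hall v hv]; ring
      rw [hz, mul_zero]
      exact rhs_nonneg E hE z hz0
    · push_neg at h1
      have hI2 : 2 ≤ (Finset.univ.image z).card := h1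
      set I := Finset.univ.image z with hIdef
      have hIne : I.Nonempty := Finset.card_pos.mp (by omega)
      set T := I.max' hIne with hTdef
      have hTI : T ∈ I := I.max'_mem hIne
      have htop : ∀ v, z v ≤ T := fun v =>
        I.le_max' _ (Finset.mem_image_of_mem z (Finset.mem_univ v))
      obtain ⟨vT, _, hvT⟩ := Finset.mem_image.mp hTI
      have hJne : (I.filter (fun t => t < T)).Nonempty := by
        obtain ⟨a, ha, b, hb, hab⟩ := Finset.one_lt_card.mp (by omega : 1 < I.card)
        rcases eq_or_ne a T with rfl | haT
        · exact ⟨b, Finset.mem_filter.2 ⟨hb, lt_of_le_of_ne (I.le_max' _ hb) (Ne.symm hab)⟩⟩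
        · exact ⟨a, Finset.mem_filter.2 ⟨ha, lt_of_le_of_ne (I.le_max' _ ha) haT⟩⟩
      set c := (I.filter (fun t => t < T)).max' hJne with hcdef
      have hcmem := (I.filter (fun t => t < T)).max'_mem hJne
      have hcI : c ∈ I := (Finset.mem_filter.mp hcmem).1
      have hcT : c < T := (Finset.mem_filter.mp hcmem).2
      obtain ⟨vc, _, hvc⟩ := Finset.mem_image.mp hcI
      have hc0 : 0 ≤ c := hvc ▸ hz0 vc
      have hdich : ∀ v, z v ≤ c ∨ z v = T := by
        intro v
        rcases eq_or_ne (z v) T with h | h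
        · exact Or.inr h
        · refine Or.inl ((I.filter (fun t => t < T)).le_max' _ ?_)
          exact Finset.mem_filter.2 ⟨Finset.mem_image_of_mem z (Finset.mem_univ v),
            lt_of_le_of_ne (htop v) h⟩
      set S := Finset.univ.filter (fun v => c < z v) with hSdef
      have hmemS : ∀ v, v ∈ S ↔ c < z v := fun v => by simp [hSdef]
      have hSval : ∀ v, v ∈ S → z v = T := by
        intro v hv
        rcases hdich v with h | h
        · exact absurd ((hmemS v).1 hv) (not_lt.2 h)
        · exact h
      have hnotS : ∀ v, v ∉ S → z v ≤ c := fun v hv => not_lt.1 (fun h => hv ((hmemS v).2 h))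
      have hSne : S.Nonempty := ⟨vT, (hmemS vT).2 (hvT ▸ hcT)⟩
      have hSuniv : S ≠ Finset.univ := by
        intro h
        have hmem : vc ∈ S := h ▸ Finset.mem_univ vc
        have h2 := (hmemS vc).1 hmem
        rw [hvc] at h2
        exact lt_irrefl c h2
      set z' := fun v => min (z v) c with hz'def
      have hz'0 : ∀ v, 0 ≤ z' v := fun v => le_min (hz0 v) hc0
      have hz'zero : ∀ v, z v = 0 → z' v = 0 := fun v h => by
        simp [hz'def, h, min_eq_left hc0]
      -- volume condition for z'
      have hsupp' : ∑ v ∈ Finset.univ.filter (fun v => z' v ≠ 0), d v ≤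
          ∑ v ∈ Finset.univ.filter (fun v => z' v = 0), d v := by
        have hs1 : Finset.univ.filter (fun v => z' v ≠ 0) ⊆
            Finset.univ.filter (fun v => z v ≠ 0) := by
          intro v hv
          simp only [Finset.mem_filter] at hv ⊢
          exact ⟨hv.1, fun h => hv.2 (hz'zero v h)⟩
        have hs2 : Finset.univ.filter (fun v => z v = 0) ⊆
            Finset.univ.filter (fun v => z' v = 0) := by
          intro v hv
          simp only [Finset.mem_filter] at hv ⊢
          exact ⟨hv.1, hz'zero v hv.2⟩
        calc ∑ v ∈ Finset.univ.filter (fun v => z' v ≠ 0), d v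
            ≤ ∑ v ∈ Finset.univ.filter (fun v => z v ≠ 0), d v :=
              Finset.sum_le_sum_of_subset_of_nonneg hs1 (fun v _ _ => hd0 v)
          _ ≤ ∑ v ∈ Finset.univ.filter (fun v => z v = 0), d v := hsupp
          _ ≤ ∑ v ∈ Finset.univ.filter (fun v => z' v = 0), d v :=
              Finset.sum_le_sum_of_subset_of_nonneg hs2 (fun v _ _ => hd0 v)
      -- card of image z'
      have hcard' : (Finset.univ.image z').card ≤ n := by
        have hsub : Finset.univ.image z' ⊆ I.erase T := by
          intro u hu
          obtain ⟨v, _, rfl⟩ := Finset.mem_image.mp hu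
          have hzv : z' v = min (z v) c := rfl
          rw [hzv]
          rcases le_total (z v) c with h | h
          · rw [Finset.mem_erase]
            refine ⟨?_, by rw [min_eq_left h]; exact Finset.mem_image_of_mem z (Finset.mem_univ v)⟩
            rw [min_eq_left h]; exact ne_of_lt (lt_of_le_of_lt h hcT)
          · rw [Finset.mem_erase, min_eq_right h]
            exact ⟨ne_of_lt hcT, hcI⟩
        calc (Finset.univ.image z').card ≤ (I.erase T).card := Finset.card_le_card hsub
          _ = I.card - 1 := Finset.card_erase_of_mem hTI
          _ ≤ n := by omega
      have hIH := ih z' hcard' hz'0 hsupp'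
      -- sum identity
      have hA : ∑ v, (z v) ^ 2 * d v =
          ∑ v, (z' v) ^ 2 * d v + (T ^ 2 - c ^ 2) * ∑ v ∈ S, d v := by
        have hpt : ∀ v, (z v) ^ 2 * d v =
            (z' v) ^ 2 * d v + (if c < z v then (T ^ 2 - c ^ 2) * d v else 0) := by
          intro v
          have hzv : z' v = min (z v) c := rfl
          by_cases h : c < z v
          · have hT : z v = T := hSval v ((hmemS v).2 h)
            have hz'v : z' v = c := by rw [hzv]; exact min_eq_right (le_of_lt h)
            rw [if_pos h, hT, hz'v]; ring
          · have hz'v : z' v = z v := by rw [hzv]; exact min_eq_left (not_lt.1 h)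
            rw [if_neg h, hz'v]; ring
        rw [Finset.sum_congr rfl (fun v _ => hpt v), Finset.sum_add_distrib]
        congr 1
        rw [Finset.sum_ite, Finset.sum_const_zero, add_zero, Finset.mul_sum]
      -- per-edge inequality
      have hedge : ∀ e ∈ E,
          ((msup z' e) ^ 2 - (minf z' e) ^ 2) +
            (T ^ 2 - c ^ 2) * (if (∃ a ∈ e, a ∈ S) ∧ (∃ b ∈ e, b ∉ S) then (1:ℝ) else 0) ≤
          (msup z e) ^ 2 - (minf z e) ^ 2 := by
        intro e he
        have hne := hE e he
        by_cases hcut : (∃ a ∈ e, a ∈ S) ∧ (∃ b ∈ e, b ∉ S)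
        · obtain ⟨⟨a, ha, haS⟩, ⟨b, hb, hbS⟩⟩ := hcut
          rw [if_pos ⟨⟨a, ha, haS⟩, ⟨b, hb, hbS⟩⟩, mul_one]
          have hza : z a = T := hSval a haS
          have hM : msup z e = T := by
            refine le_antisymm ?_ (hza ▸ le_msup z ha)
            obtain ⟨w, _, hEq⟩ := exists_msup z hne
            rw [hEq]; exact htop w
          have hzb : z b ≤ c := hnotS b hbS
          have hm_le : minf z e ≤ c := le_trans (minf_le z hb) hzb
          have hm0 : 0 ≤ minf z e := by
            obtain ⟨w, _, hEq⟩ := exists_minf z hne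
            rw [hEq]; exact hz0 w
          have hM' : msup z' e ≤ c := by
            rw [msup_eq z' e hne]
            exact Finset.sup'_le _ _ (fun w _ => min_le_right _ _)
          have hm' : minf z e ≤ minf z' e := by
            rw [minf_eq z' e hne]
            exact Finset.le_inf' _ _ (fun w hw =>
              le_min (minf_le z (Multiset.mem_toFinset.1 hw)) hm_le)
          have hM'0 : 0 ≤ msup z' e := by
            obtain ⟨w, hw, hEq⟩ := exists_msup z' hne
            rw [hEq]; exact hz'0 w
          rw [hM]
          nlinarith
        · rw [if_neg hcut, mul_zero, add_zero]
          by_cases hAS : ∃ a ∈ e, a ∈ S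
          · have hB : ∀ b ∈ e, b ∈ S := by
              intro b hb
              by_contra hbS
              exact hcut ⟨hAS, ⟨b, hb, hbS⟩⟩
            obtain ⟨a₀, ha₀⟩ := hE e he
            have ha₀e : a₀ ∈ e := Multiset.mem_toFinset.1 ha₀
            have hallT : ∀ w ∈ e, z w = T := fun w hw => hSval w (hB w hw)
            have hM : msup z e = T := by
              refine le_antisymm ?_ ((hallT a₀ ha₀e) ▸ le_msup z ha₀e)
              obtain ⟨w, hw, hEq⟩ := exists_msup z hne
              rw [hEq, hallT w hw]
            have hm : minf z e = T := by
              refine le_antisymm ?_ ?_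
              · obtain ⟨w, hw, hEq⟩ := exists_minf z hne
                rw [hEq, hallT w hw]
              · rw [minf_eq z e hne]
                exact Finset.le_inf' _ _ (fun w hw => (hallT w (Multiset.mem_toFinset.1 hw)).ge)
            have hallc : ∀ w ∈ e, z' w = c := fun w hw => by
              rw [hz'def]; simp only; rw [hallT w hw, min_eq_right (le_of_lt hcT)]
            have hM' : msup z' e = c := by
              refine le_antisymm ?_ ((hallc a₀ ha₀e) ▸ le_msup z' ha₀e)
              obtain ⟨w, hw, hEq⟩ := exists_msup z' hne
              rw [hEq, hallc w hw]
            have hm' : minf z' e = c := by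
              refine le_antisymm ((hallc a₀ ha₀e) ▸ minf_le z' ha₀e) ?_
              obtain ⟨w, hw, hEq⟩ := exists_minf z' hne
              rw [hEq, hallc w hw]
            rw [hM, hm, hM', hm']
            linarith
          · have hz'e : ∀ w ∈ e, z' w = z w := by
              intro w hw
              exact min_eq_left (hnotS w (fun hS => hAS ⟨w, hw, hS⟩))
            have hM' : msup z' e = msup z e := by
              rw [msup_eq z' e hne, msup_eq z e hne]
              exact Finset.sup'_congr hne rfl (fun w hw => hz'e w (Multiset.mem_toFinset.1 hw))
            have hm' : minf z' e = minf z e := by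
              rw [minf_eq z' e hne, minf_eq z e hne]
              exact Finset.inf'_congr hne rfl (fun w hw => hz'e w (Multiset.mem_toFinset.1 hw))
            rw [hM', hm']
      -- summed
      have hsum : (E.map fun e => (msup z' e) ^ 2 - (minf z' e) ^ 2).sum +
          (T ^ 2 - c ^ 2) *
            ((E.filter fun e => (∃ a ∈ e, a ∈ S) ∧ ∃ b ∈ e, b ∉ S).card : ℝ) ≤
          (E.map fun e => (msup z e) ^ 2 - (minf z e) ^ 2).sum := by
        rw [card_filter_eq_sum, ← Multiset.sum_map_mul_left, ← Multiset.sum_map_add]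
        exact Multiset.sum_map_le_sum_map _ _ hedge
      -- expansion applied to S
      have hvolS : ∑ v ∈ S, d v ≤ ∑ v ∈ Sᶜ, d v := by
        have hs1 : S ⊆ Finset.univ.filter (fun v => z v ≠ 0) := by
          intro v hv
          have := (hmemS v).1 hv
          simp only [Finset.mem_filter, Finset.mem_univ, true_and]
          exact ne_of_gt (lt_of_le_of_lt hc0 this)
        have hs2 : Finset.univ.filter (fun v => z v = 0) ⊆ Sᶜ := by
          intro v hv
          simp only [Finset.mem_filter] at hv
          rw [Finset.mem_compl]
          intro hS
          have := (hmemS v).1 hS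
          rw [hv.2] at this
          exact absurd this (not_lt.2 hc0)
        calc ∑ v ∈ S, d v ≤ ∑ v ∈ Finset.univ.filter (fun v => z v ≠ 0), d v :=
              Finset.sum_le_sum_of_subset_of_nonneg hs1 (fun v _ _ => hd0 v)
          _ ≤ ∑ v ∈ Finset.univ.filter (fun v => z v = 0), d v := hsupp
          _ ≤ ∑ v ∈ Sᶜ, d v := Finset.sum_le_sum_of_subset_of_nonneg hs2 (fun v _ _ => hd0 v)
      have hcutS := hexp S hSne hSuniv
      rw [min_eq_left hvolS] at hcutS
      have hTc : 0 ≤ T ^ 2 - c ^ 2 := by nlinarith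
      have h6 : (T ^ 2 - c ^ 2) * (Φ * ∑ v ∈ S, d v) ≤
          (T ^ 2 - c ^ 2) *
            ((E.filter fun e => (∃ a ∈ e, a ∈ S) ∧ ∃ b ∈ e, b ∉ S).card : ℝ) :=
        mul_le_mul_of_nonneg_left hcutS hTc
      rw [hA]
      have hexpand : Φ * (∑ v, (z' v) ^ 2 * d v + (T ^ 2 - c ^ 2) * ∑ v ∈ S, d v) =
          Φ * ∑ v, (z' v) ^ 2 * d v + (T ^ 2 - c ^ 2) * (Φ * ∑ v ∈ S, d v) := by ring
      linarith [hIH, h6, hsum, hexpand.le, hexpand.ge]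


/-- Hypergraph Cheeger inequality: in an `r`-uniform hypergraph with expansion at least
`Φ ≤ 2/r`, every vector `x` with `∑ v, x v * d v = 0` satisfies
`Q(x) ≥ (r Φ² / 32) ∑ v, (x v)² d v`. -/
theorem stmt_3 {V : Type*} [Fintype V] [DecidableEq V]
    (E : Multiset (Multiset V)) (r : ℕ) (hr : 0 < r)
    (hunif : ∀ e ∈ E, Multiset.card e = r)
    (d : V → ℕ) (hd : ∀ v, d v = (E.map fun e => e.count v).sum)
    (Φ : ℝ) (hΦ0 : 0 ≤ Φ) (hΦ : Φ ≤ 2 / r)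
    (hexp : ∀ S : Finset V, S.Nonempty → S ≠ Finset.univ →
      Φ * min (∑ v ∈ S, (d v : ℝ)) (∑ v ∈ Sᶜ, (d v : ℝ)) ≤
        ((E.filter fun e => (∃ a ∈ e, a ∈ S) ∧ ∃ b ∈ e, b ∉ S).card : ℝ))
    (x : V → ℝ) (hx : ∑ v, x v * d v = 0) :
    ((r : ℝ) * Φ ^ 2 / 32) * ∑ v, (x v) ^ 2 * d v ≤
      (E.map fun e => sSup {y : ℝ | ∃ a ∈ e, ∃ b ∈ e, y = (x a - x b) ^ 2}).sum := by
  have hEne : ∀ e ∈ E, e.toFinset.Nonempty := by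
    intro e he
    have hcard : 0 < Multiset.card e := by rw [hunif e he]; exact hr
    obtain ⟨a, ha⟩ := Multiset.exists_mem_of_ne_zero (Multiset.card_pos.mp hcard)
    exact ⟨a, Multiset.mem_toFinset.2 ha⟩
  have hRHS : (E.map fun e => sSup {y : ℝ | ∃ a ∈ e, ∃ b ∈ e, y = (x a - x b) ^ 2}).sum
      = (E.map fun e => (msup x e - minf x e) ^ 2).sum := by
    congr 1
    exact Multiset.map_congr rfl fun e he => sSup_pairs x e (hEne e he)
  rw [hRHS]
  set Qx := (E.map fun e => (msup x e - minf x e) ^ 2).sum with hQxdef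
  have hQx0 : 0 ≤ Qx := Multiset.sum_nonneg (by
    intro y hy; obtain ⟨e, he, rfl⟩ := Multiset.mem_map.1 hy; exact sq_nonneg _)
  rcases isEmpty_or_nonempty V with hV | hV
  · have h0 : ∑ v, (x v) ^ 2 * (d v : ℝ) = 0 := by simp
    rw [h0, mul_zero]; exact hQx0
  have hd0 : ∀ v, (0:ℝ) ≤ ((d v : ℕ) : ℝ) := fun v => Nat.cast_nonneg _
  have hr0 : (0:ℝ) < (r:ℝ) := by exact_mod_cast hr
  have hβ0 : (0:ℝ) ≤ (r:ℝ) * Φ := mul_nonneg hr0.le hΦ0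
  have hβ2 : (r:ℝ) * Φ ≤ 2 := by
    have h1 : (r:ℝ) * Φ ≤ (r:ℝ) * (2 / (r:ℝ)) :=
      mul_le_mul_of_nonneg_left hΦ hr0.le
    rwa [mul_div_cancel₀ _ (ne_of_gt hr0)] at h1
  obtain ⟨c, hmed1, hmed2⟩ := median (fun v => ((d v : ℕ) : ℝ)) hd0 x
  set zp := fun v => max (x v - c) 0 with hzp
  set zm := fun v => max (c - x v) 0 with hzm
  have hzp0 : ∀ v, 0 ≤ zp v := fun v => le_max_right _ _
  have hzm0 : ∀ v, 0 ≤ zm v := fun v => le_max_right _ _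
  have hzp_zero : ∀ v, zp v = 0 ↔ x v ≤ c := by
    intro v; simp only [hzp]
    rw [max_eq_right_iff, sub_nonpos]
  have hzm_zero : ∀ v, zm v = 0 ↔ c ≤ x v := by
    intro v; simp only [hzm]
    rw [max_eq_right_iff, sub_nonpos]
  have hsupp_p : ∑ v ∈ Finset.univ.filter (fun v => zp v ≠ 0), ((d v : ℕ) : ℝ) ≤
      ∑ v ∈ Finset.univ.filter (fun v => zp v = 0), ((d v : ℕ) : ℝ) := by
    have e1 : Finset.univ.filter (fun v => zp v ≠ 0) =
        Finset.univ.filter (fun v => c < x v) :=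
      Finset.filter_congr fun v _ => by rw [Ne, hzp_zero v, not_le]
    have e2 : Finset.univ.filter (fun v => zp v = 0) =
        Finset.univ.filter (fun v => x v ≤ c) :=
      Finset.filter_congr fun v _ => hzp_zero v
    rw [e1, e2]; exact hmed1
  have hsupp_m : ∑ v ∈ Finset.univ.filter (fun v => zm v ≠ 0), ((d v : ℕ) : ℝ) ≤
      ∑ v ∈ Finset.univ.filter (fun v => zm v = 0), ((d v : ℕ) : ℝ) := by
    have e1 : Finset.univ.filter (fun v => zm v ≠ 0) =
        Finset.univ.filter (fun v => x v < c) :=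
      Finset.filter_congr fun v _ => by rw [Ne, hzm_zero v, not_le]
    have e2 : Finset.univ.filter (fun v => zm v = 0) =
        Finset.univ.filter (fun v => c ≤ x v) :=
      Finset.filter_congr fun v _ => hzm_zero v
    rw [e1, e2]; exact hmed2
  set Ap := ∑ v, (zp v) ^ 2 * ((d v : ℕ) : ℝ) with hApdef
  set Am := ∑ v, (zm v) ^ 2 * ((d v : ℕ) : ℝ) with hAmdef
  set Sp := (E.map fun e => (msup zp e) ^ 2 - (minf zp e) ^ 2).sum with hSpdef
  set Sm := (E.map fun e => (msup zm e) ^ 2 - (minf zm e) ^ 2).sum with hSmdef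
  set Qp := (E.map fun e => (msup zp e - minf zp e) ^ 2).sum with hQpdef
  set Qm := (E.map fun e => (msup zm e - minf zm e) ^ 2).sum with hQmdef
  set Wp := (E.map fun e => (msup zp e + minf zp e) ^ 2).sum with hWpdef
  set Wm := (E.map fun e => (msup zm e + minf zm e) ^ 2).sum with hWmdef
  set Np := (E.map fun e => (minf zp e) ^ 2).sum with hNpdef
  set Nm := (E.map fun e => (minf zm e) ^ 2).sum with hNmdef
  have hsq0 : ∀ (f : Multiset V → ℝ), 0 ≤ (E.map fun e => (f e) ^ 2).sum := by
    intro f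
    apply Multiset.sum_nonneg
    intro y hy; obtain ⟨e, he, rfl⟩ := Multiset.mem_map.1 hy; exact sq_nonneg _
  have hQp0 : 0 ≤ Qp := hsq0 _
  have hQm0 : 0 ≤ Qm := hsq0 _
  have hkeyp : Φ * ∑ v, (zp v) ^ 2 * ((d v : ℕ) : ℝ) ≤ Sp :=
    key E hEne (fun v => ((d v : ℕ) : ℝ)) hd0 Φ hΦ0 hexp
      (Finset.univ.image zp).card zp le_rfl hzp0 hsupp_p
  have hkeym : Φ * ∑ v, (zm v) ^ 2 * ((d v : ℕ) : ℝ) ≤ Sm :=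
    key E hEne (fun v => ((d v : ℕ) : ℝ)) hd0 Φ hΦ0 hexp
      (Finset.univ.image zm).card zm le_rfl hzm0 hsupp_m
  -- F2 : β * S ≤ 8 Q + (β²/32) W
  have hF2 : ∀ (z : V → ℝ),
      (r:ℝ) * Φ * (E.map fun e => (msup z e) ^ 2 - (minf z e) ^ 2).sum ≤
        8 * (E.map fun e => (msup z e - minf z e) ^ 2).sum +
        (((r:ℝ) * Φ) ^ 2 / 32) * (E.map fun e => (msup z e + minf z e) ^ 2).sum := by
    intro z
    have hpt : ∀ e ∈ E, (r:ℝ) * Φ * ((msup z e) ^ 2 - (minf z e) ^ 2) ≤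
        8 * (msup z e - minf z e) ^ 2 +
        (((r:ℝ) * Φ) ^ 2 / 32) * (msup z e + minf z e) ^ 2 := by
      intro e _
      nlinarith [sq_nonneg (16 * (msup z e - minf z e) - (r:ℝ) * Φ * (msup z e + minf z e))]
    calc (r:ℝ) * Φ * (E.map fun e => (msup z e) ^ 2 - (minf z e) ^ 2).sum
        = (E.map fun e => (r:ℝ) * Φ * ((msup z e) ^ 2 - (minf z e) ^ 2)).sum :=
          (Multiset.sum_map_mul_left).symm
      _ ≤ (E.map fun e => 8 * (msup z e - minf z e) ^ 2 +
            (((r:ℝ) * Φ) ^ 2 / 32) * (msup z e + minf z e) ^ 2).sum :=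
          Multiset.sum_map_le_sum_map _ _ hpt
      _ = _ := by
          rw [Multiset.sum_map_add, Multiset.sum_map_mul_left, Multiset.sum_map_mul_left]
  -- F3 : W ≤ 2 Q + 8 N
  have hF3 : ∀ (z : V → ℝ),
      (E.map fun e => (msup z e + minf z e) ^ 2).sum ≤
        2 * (E.map fun e => (msup z e - minf z e) ^ 2).sum +
        8 * (E.map fun e => (minf z e) ^ 2).sum := by
    intro z
    have hpt : ∀ e ∈ E, (msup z e + minf z e) ^ 2 ≤
        2 * (msup z e - minf z e) ^ 2 + 8 * (minf z e) ^ 2 := by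
      intro e _
      nlinarith [sq_nonneg (msup z e - 3 * minf z e)]
    calc (E.map fun e => (msup z e + minf z e) ^ 2).sum
        ≤ (E.map fun e => 2 * (msup z e - minf z e) ^ 2 + 8 * (minf z e) ^ 2).sum :=
          Multiset.sum_map_le_sum_map _ _ hpt
      _ = _ := by
          rw [Multiset.sum_map_add, Multiset.sum_map_mul_left, Multiset.sum_map_mul_left]
  -- F4 : r * N ≤ A
  have hF4 : ∀ (z : V → ℝ), (∀ v, 0 ≤ z v) →
      (r:ℝ) * (E.map fun e => (minf z e) ^ 2).sum ≤ ∑ v, (z v) ^ 2 * ((d v : ℕ) : ℝ) := by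
    intro z hz0
    have hpt : ∀ e ∈ E, (r:ℝ) * (minf z e) ^ 2 ≤ (e.map fun v => (z v) ^ 2).sum := by
      intro e he
      have hne := hEne e he
      have hb : ∀ y ∈ e.map (fun v => (z v) ^ 2), (minf z e) ^ 2 ≤ y := by
        intro y hy
        obtain ⟨w, hw, rfl⟩ := Multiset.mem_map.1 hy
        have h1 : minf z e ≤ z w := minf_le z hw
        obtain ⟨a, _, hEq⟩ := exists_minf z hne
        have h2 : 0 ≤ minf z e := hEq ▸ hz0 a
        exact pow_le_pow_left₀ h2 h1 2
      have hle := Multiset.card_nsmul_le_sum hb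
      rw [Multiset.card_map, hunif e he] at hle
      simpa [nsmul_eq_mul] using hle
    calc (r:ℝ) * (E.map fun e => (minf z e) ^ 2).sum
        = (E.map fun e => (r:ℝ) * (minf z e) ^ 2).sum := (Multiset.sum_map_mul_left).symm
      _ ≤ (E.map fun e => (e.map fun v => (z v) ^ 2).sum).sum :=
          Multiset.sum_map_le_sum_map _ _ hpt
      _ = ∑ v, (z v) ^ 2 * ((d v : ℕ) : ℝ) := deg_sum E d hd (fun v => (z v) ^ 2)
  have hF4p : (r:ℝ) * Np ≤ Ap := hF4 zp hzp0
  have hF4m : (r:ℝ) * Nm ≤ Am := hF4 zm hzm0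
  -- F5 : Qp + Qm ≤ 2 Qx
  have hF5 : Qp + Qm ≤ 2 * Qx := by
    have hpt : ∀ e ∈ E, (msup zp e - minf zp e) ^ 2 + (msup zm e - minf zm e) ^ 2 ≤
        2 * (msup x e - minf x e) ^ 2 := by
      intro e he
      have hne := hEne e he
      have hMx : (0:ℝ) ≤ msup x e - minf x e := by linarith [minf_le_msup x hne]
      have h1 : msup zp e - minf zp e ≤ msup x e - minf x e := by
        obtain ⟨a, ha, haEq⟩ := exists_msup zp hne
        obtain ⟨b, hb, hbEq⟩ := exists_minf zp hne
        have h3 := max_sub_max_le (x a - c) (x b - c)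
        have h4 : x a - c - (x b - c) = x a - x b := by ring
        rw [h4] at h3
        have h5 : x a - x b ≤ msup x e - minf x e := by
          have h5a := le_msup x ha; have h5b := minf_le x hb; linarith
        have h7 : max (x a - x b) 0 ≤ msup x e - minf x e := max_le h5 hMx
        have h8 : zp a - zp b = max (x a - c) 0 - max (x b - c) 0 := by
          simp only [hzp]
        rw [haEq, hbEq]
        linarith
      have h1m : msup zm e - minf zm e ≤ msup x e - minf x e := by
        obtain ⟨a, ha, haEq⟩ := exists_msup zm hne
        obtain ⟨b, hb, hbEq⟩ := exists_minf zm hne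
        have h3 := max_sub_max_le (c - x a) (c - x b)
        have h4 : c - x a - (c - x b) = x b - x a := by ring
        rw [h4] at h3
        have h5 : x b - x a ≤ msup x e - minf x e := by
          have h5a := le_msup x hb; have h5b := minf_le x ha; linarith
        have h7 : max (x b - x a) 0 ≤ msup x e - minf x e := max_le h5 hMx
        have h8 : zm a - zm b = max (c - x a) 0 - max (c - x b) 0 := by
          simp only [hzm]
        rw [haEq, hbEq]
        linarith
      have h0p : (0:ℝ) ≤ msup zp e - minf zp e := by linarith [minf_le_msup zp hne]
      have h0m : (0:ℝ) ≤ msup zm e - minf zm e := by linarith [minf_le_msup zm hne]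
      have hsp := pow_le_pow_left₀ h0p h1 2
      have hsm := pow_le_pow_left₀ h0m h1m 2
      linarith
    calc Qp + Qm
        = (E.map fun e => (msup zp e - minf zp e) ^ 2 + (msup zm e - minf zm e) ^ 2).sum := by
          rw [Multiset.sum_map_add]
      _ ≤ (E.map fun e => 2 * (msup x e - minf x e) ^ 2).sum :=
          Multiset.sum_map_le_sum_map _ _ hpt
      _ = 2 * Qx := Multiset.sum_map_mul_left
  -- F6 : A ≤ Ap + Am
  have hF6 : ∑ v, (x v) ^ 2 * ((d v : ℕ) : ℝ) ≤ Ap + Am := by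
    have hpt : ∀ v, (zp v) ^ 2 + (zm v) ^ 2 = (x v - c) ^ 2 := by
      intro v; simp only [hzp, hzm]
      rcases le_total (x v) c with h | h
      · rw [max_eq_right (by linarith : x v - c ≤ 0), max_eq_left (by linarith : (0:ℝ) ≤ c - x v)]
        ring
      · rw [max_eq_left (by linarith : (0:ℝ) ≤ x v - c), max_eq_right (by linarith : c - x v ≤ 0)]
        ring
    have h1 : Ap + Am = ∑ v, (x v - c) ^ 2 * ((d v : ℕ) : ℝ) := by
      rw [hApdef, hAmdef, ← Finset.sum_add_distrib]
      exact Finset.sum_congr rfl fun v _ => by rw [← hpt v]; ring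
    have h2 : ∑ v, (x v - c) ^ 2 * ((d v : ℕ) : ℝ) =
        ∑ v, (x v) ^ 2 * ((d v : ℕ) : ℝ) - 2 * c * ∑ v, x v * ((d v : ℕ) : ℝ) +
          c ^ 2 * ∑ v, ((d v : ℕ) : ℝ) := by
      rw [Finset.mul_sum, Finset.mul_sum, ← Finset.sum_sub_distrib, ← Finset.sum_add_distrib]
      exact Finset.sum_congr rfl fun v _ => by ring
    have h3 : (0:ℝ) ≤ c ^ 2 * ∑ v, ((d v : ℕ) : ℝ) :=
      mul_nonneg (sq_nonneg c) (Finset.sum_nonneg fun v _ => hd0 v)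
    rw [h1, h2, hx]
    linarith
  -- combine
  have k1p : (r:ℝ) * Φ * (Φ * Ap) ≤ (r:ℝ) * Φ * Sp :=
    mul_le_mul_of_nonneg_left hkeyp hβ0
  have k1m : (r:ℝ) * Φ * (Φ * Am) ≤ (r:ℝ) * Φ * Sm :=
    mul_le_mul_of_nonneg_left hkeym hβ0
  have k2p : (((r:ℝ) * Φ) ^ 2 / 32) * Wp ≤ (((r:ℝ) * Φ) ^ 2 / 32) * (2 * Qp + 8 * Np) :=
    mul_le_mul_of_nonneg_left (hF3 zp) (by positivity)
  have k2m : (((r:ℝ) * Φ) ^ 2 / 32) * Wm ≤ (((r:ℝ) * Φ) ^ 2 / 32) * (2 * Qm + 8 * Nm) :=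
    mul_le_mul_of_nonneg_left (hF3 zm) (by positivity)
  have hβsq : ((r:ℝ) * Φ) ^ 2 ≤ 4 := by nlinarith
  have k3p : ((r:ℝ) * Φ) ^ 2 * Qp ≤ 4 * Qp := mul_le_mul_of_nonneg_right hβsq hQp0
  have k3m : ((r:ℝ) * Φ) ^ 2 * Qm ≤ 4 * Qm := mul_le_mul_of_nonneg_right hβsq hQm0
  have k4ap : Φ * ((r:ℝ) * Np) ≤ Φ * Ap := mul_le_mul_of_nonneg_left hF4p hΦ0
  have k4am : Φ * ((r:ℝ) * Nm) ≤ Φ * Am := mul_le_mul_of_nonneg_left hF4m hΦ0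
  have k4p : ((r:ℝ) * Φ) ^ 2 * Np ≤ (r:ℝ) * Φ * (Φ * Ap) := by
    have := mul_le_mul_of_nonneg_left k4ap hβ0
    nlinarith [this]
  have k4m : ((r:ℝ) * Φ) ^ 2 * Nm ≤ (r:ℝ) * Φ * (Φ * Am) := by
    have := mul_le_mul_of_nonneg_left k4am hβ0
    nlinarith [this]
  have hp : (r:ℝ) * Φ * (Φ * Ap) ≤ 11 * Qp := by
    have hF2p := hF2 zp
    linarith
  have hm : (r:ℝ) * Φ * (Φ * Am) ≤ 11 * Qm := by
    have hF2m := hF2 zm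
    linarith
  have hAcomb : (r:ℝ) * Φ * (Φ * ∑ v, (x v) ^ 2 * ((d v : ℕ) : ℝ)) ≤
      (r:ℝ) * Φ * (Φ * (Ap + Am)) :=
    mul_le_mul_of_nonneg_left (mul_le_mul_of_nonneg_left hF6 hΦ0) hβ0
  linarith
end

section
/- Let G = (V, E) be a directed hypergraph on n vertices. Then Σ_{e ∈ E} 1/k(e) ≤ n², where k(e) is the overlap of hyperarc e. -/
namespace Stmt4Aux

variable {V : Type*} [Fintype V] [DecidableEq V]

/-- The set of valid overlap values for `e` within `F`. -/
def ovSet (F : Finset (Finset V × Finset V)) (e : Finset V × Finset V) : Set ℕ :=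
  {m : ℕ | ∃ E' ⊆ F, e ∈ E' ∧ ∀ a b : V, (∃ e' ∈ E', a ∈ e'.1 ∧ b ∈ e'.2) →
      m ≤ (E'.filter fun e' => a ∈ e'.1 ∧ b ∈ e'.2).card}

/-- The overlap of `e` within `F`. -/
noncomputable def kk (F : Finset (Finset V × Finset V)) (e : Finset V × Finset V) : ℕ :=
  sSup (ovSet F e)

lemma one_mem_ovSet {F : Finset (Finset V × Finset V)} {e : Finset V × Finset V}
    (he : e ∈ F) : 1 ∈ ovSet F e := by
  refine ⟨{e}, Finset.singleton_subset_iff.2 he, Finset.mem_singleton_self e, ?_⟩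
  intro a b hab
  obtain ⟨e', he', ha, hb⟩ := hab
  rw [Finset.mem_singleton] at he'
  subst he'
  have : e' ∈ ({e'} : Finset (Finset V × Finset V)).filter fun x => a ∈ x.1 ∧ b ∈ x.2 := by
    simp [ha, hb]
  exact Finset.card_pos.2 ⟨e', this⟩

lemma bddAbove_ovSet {F : Finset (Finset V × Finset V)} {e : Finset V × Finset V}
    (h1 : e.1.Nonempty) (h2 : e.2.Nonempty) : BddAbove (ovSet F e) := by
  refine ⟨F.card, fun m hm => ?_⟩
  obtain ⟨E', hE'F, heE', hall⟩ := hm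
  obtain ⟨a, ha⟩ := h1
  obtain ⟨b, hb⟩ := h2
  calc m ≤ (E'.filter fun e' => a ∈ e'.1 ∧ b ∈ e'.2).card :=
        hall a b ⟨e, heE', ha, hb⟩
    _ ≤ E'.card := Finset.card_filter_le _ _
    _ ≤ F.card := Finset.card_le_card hE'F

lemma kk_mem {F : Finset (Finset V × Finset V)} {e : Finset V × Finset V}
    (he : e ∈ F) (h1 : e.1.Nonempty) (h2 : e.2.Nonempty) : kk F e ∈ ovSet F e :=
  Nat.sSup_mem ⟨1, one_mem_ovSet he⟩ (bddAbove_ovSet h1 h2)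

lemma one_le_kk {F : Finset (Finset V × Finset V)} {e : Finset V × Finset V}
    (he : e ∈ F) (h1 : e.1.Nonempty) (h2 : e.2.Nonempty) : 1 ≤ kk F e :=
  le_csSup (bddAbove_ovSet h1 h2) (one_mem_ovSet he)

lemma kk_mono {F F' : Finset (Finset V × Finset V)} {e : Finset V × Finset V}
    (hFF : F ⊆ F') (he : e ∈ F) (h1 : e.1.Nonempty) (h2 : e.2.Nonempty) :
    kk F e ≤ kk F' e := by
  apply csSup_le_csSup (bddAbove_ovSet h1 h2) ⟨1, one_mem_ovSet he⟩
  rintro m ⟨E', hE'F, heE', hall⟩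
  exact ⟨E', hE'F.trans hFF, heE', hall⟩

/-- Multiplicity of an arc. -/
def mult (F : Finset (Finset V × Finset V)) (a b : V) : ℕ :=
  (F.filter fun e' => a ∈ e'.1 ∧ b ∈ e'.2).card

/-- The arcs appearing in `F`. -/
def arcs (F : Finset (Finset V × Finset V)) : Finset (V × V) :=
  F.biUnion fun e => e.1 ×ˢ e.2

lemma mem_arcs {F : Finset (Finset V × Finset V)} {a b : V} :
    (a, b) ∈ arcs F ↔ ∃ e ∈ F, a ∈ e.1 ∧ b ∈ e.2 := by
  simp [arcs, Finset.mem_biUnion, Finset.mem_product]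

/-- Main lemma: the sum of inverse overlaps is at most the number of arcs. -/
lemma main (F : Finset (Finset V × Finset V))
    (hF : ∀ e ∈ F, e.1.Nonempty ∧ e.2.Nonempty) :
    ∑ e ∈ F, (1 : ℝ) / (kk F e) ≤ (arcs F).card := by
  induction F using Finset.strongInduction with
  | _ F ih =>
  rcases F.eq_empty_or_nonempty with rfl | hFne
  · simp
  -- pick a minimum-multiplicity arc
  have harcs : (arcs F).Nonempty := by
    obtain ⟨e, he⟩ := hFne
    obtain ⟨a, ha⟩ := (hF e he).1
    obtain ⟨b, hb⟩ := (hF e he).2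
    exact ⟨(a, b), mem_arcs.2 ⟨e, he, ha, hb⟩⟩
  obtain ⟨p, hp, hmin⟩ := Finset.exists_min_image (arcs F)
    (fun q => mult F q.1 q.2) harcs
  set a := p.1 with hpa
  set b := p.2 with hpb
  have hpab : p = (a, b) := rfl
  rw [hpab] at hp
  set S : Finset (Finset V × Finset V) := F.filter fun e' => a ∈ e'.1 ∧ b ∈ e'.2 with hS
  set m : ℕ := S.card with hm
  have hSsub : S ⊆ F := Finset.filter_subset _ _
  have hSne : S.Nonempty := by
    obtain ⟨e, he, ha, hb⟩ := mem_arcs.1 hp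
    exact ⟨e, Finset.mem_filter.2 ⟨he, ha, hb⟩⟩
  have hm1 : 1 ≤ m := Finset.card_pos.2 hSne
  -- (B): F itself is m-overlapping, so kk F e ≥ m for all e ∈ F
  have hB : ∀ e ∈ F, m ≤ kk F e := by
    intro e he
    apply le_csSup (bddAbove_ovSet (hF e he).1 (hF e he).2)
    refine ⟨F, le_refl F, he, ?_⟩
    intro a' b' hab
    have : (a', b') ∈ arcs F := mem_arcs.2 hab
    exact hmin (a', b') this
  -- (C): kk F e ≤ m for e ∈ S
  have hC : ∀ e ∈ S, kk F e = m := by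
    intro e heS
    have heF : e ∈ F := hSsub heS
    refine le_antisymm ?_ (hB e heF)
    obtain ⟨E', hE'F, heE', hall⟩ := kk_mem heF (hF e heF).1 (hF e heF).2
    have ha : a ∈ e.1 := (Finset.mem_filter.1 heS).2.1
    have hb : b ∈ e.2 := (Finset.mem_filter.1 heS).2.2
    calc kk F e ≤ (E'.filter fun e' => a ∈ e'.1 ∧ b ∈ e'.2).card :=
          hall a b ⟨e, heE', ha, hb⟩
      _ ≤ (F.filter fun e' => a ∈ e'.1 ∧ b ∈ e'.2).card :=
          Finset.card_le_card (Finset.filter_subset_filter _ hE'F)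
      _ = m := rfl
  -- sum over S equals 1
  have hsumS : ∑ e ∈ S, (1 : ℝ) / (kk F e) = 1 := by
    rw [Finset.sum_congr rfl fun e he => by rw [hC e he]]
    rw [Finset.sum_const, ← hm, nsmul_eq_mul]
    have : (m : ℝ) ≠ 0 := by exact_mod_cast Nat.one_le_iff_ne_zero.1 hm1
    field_simp
  -- strict subset
  have hFS : F \ S ⊂ F := Finset.sdiff_ssubset hSsub hSne
  -- arcs of F \ S avoid (a,b)
  have harcsub : arcs (F \ S) ⊆ arcs F \ {(a, b)} := by
    intro q hq
    obtain ⟨a', b'⟩ := q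
    obtain ⟨e, he, ha', hb'⟩ := mem_arcs.1 hq
    have heF : e ∈ F := (Finset.mem_sdiff.1 he).1
    have heNS : e ∉ S := (Finset.mem_sdiff.1 he).2
    refine Finset.mem_sdiff.2 ⟨mem_arcs.2 ⟨e, heF, ha', hb'⟩, ?_⟩
    intro hcon
    rw [Finset.mem_singleton, Prod.mk.injEq] at hcon
    exact heNS (Finset.mem_filter.2 ⟨heF, hcon.1 ▸ ha', hcon.2 ▸ hb'⟩)
  have harcscard : (arcs (F \ S)).card + 1 ≤ (arcs F).card := by
    have h1 : arcs (F \ S) ⊂ arcs F := by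
      refine Finset.ssubset_of_subset_of_ssubset harcsub ?_
      exact Finset.sdiff_ssubset (Finset.singleton_subset_iff.2 hp)
        (Finset.singleton_nonempty _)
    exact Nat.succ_le_of_lt (Finset.card_lt_card h1)
  -- sum over F \ S
  have hsumFS : ∑ e ∈ F \ S, (1 : ℝ) / (kk F e) ≤ (arcs (F \ S)).card := by
    have step : ∀ e ∈ F \ S, (1 : ℝ) / (kk F e) ≤ 1 / (kk (F \ S) e) := by
      intro e he
      have heF : e ∈ F := (Finset.mem_sdiff.1 he).1
      have h1 := (hF e heF).1
      have h2 := (hF e heF).2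
      have hpos : (0 : ℝ) < kk (F \ S) e := by
        exact_mod_cast Nat.lt_of_lt_of_le Nat.zero_lt_one (one_le_kk he h1 h2)
      apply one_div_le_one_div_of_le hpos
      exact_mod_cast kk_mono Finset.sdiff_subset he h1 h2
    calc ∑ e ∈ F \ S, (1 : ℝ) / (kk F e)
        ≤ ∑ e ∈ F \ S, (1 : ℝ) / (kk (F \ S) e) := Finset.sum_le_sum step
      _ ≤ (arcs (F \ S)).card := ih (F \ S) hFS (fun e he => hF e ((Finset.mem_sdiff.1 he).1))
  -- combine
  have hsplit : ∑ e ∈ F, (1 : ℝ) / (kk F e)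
      = ∑ e ∈ S, (1 : ℝ) / (kk F e) + ∑ e ∈ F \ S, (1 : ℝ) / (kk F e) := by
    rw [← Finset.sum_sdiff hSsub]; ring
  rw [hsplit, hsumS]
  calc 1 + ∑ e ∈ F \ S, (1 : ℝ) / (kk F e) ≤ 1 + (arcs (F \ S)).card := by linarith
    _ ≤ (arcs F).card := by exact_mod_cast by omega

end Stmt4Aux

/-- The sum over hyperarcs of the inverse overlap is at most `n²`. -/
theorem stmt_4 {V : Type*} [Fintype V] [DecidableEq V]
    (E : Finset (Finset V × Finset V))
    (hE : ∀ e ∈ E, Disjoint e.1 e.2 ∧ e.1.Nonempty ∧ e.2.Nonempty)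
    (k : Finset V × Finset V → ℕ)
    (hk : ∀ e ∈ E, k e = sSup {m : ℕ | ∃ E' ⊆ E, e ∈ E' ∧
      ∀ a b : V, (∃ e' ∈ E', a ∈ e'.1 ∧ b ∈ e'.2) →
        m ≤ (E'.filter fun e' => a ∈ e'.1 ∧ b ∈ e'.2).card}) :
    ∑ e ∈ E, (1 : ℝ) / (k e) ≤ (Fintype.card V) ^ 2 := by
  have hkk : ∀ e ∈ E, k e = Stmt4Aux.kk E e := fun e he => hk e he
  rw [Finset.sum_congr rfl fun e he => by rw [hkk e he]]
  calc ∑ e ∈ E, (1 : ℝ) / (Stmt4Aux.kk E e)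
      ≤ (Stmt4Aux.arcs E).card := Stmt4Aux.main E (fun e he => (hE e he).2)
    _ ≤ ((Finset.univ ×ˢ Finset.univ : Finset (V × V)).card : ℝ) := by
        exact_mod_cast Finset.card_le_card (Finset.subset_univ _ |>.trans (by simp))
    _ = (Fintype.card V) ^ 2 := by
        simp [Finset.card_product, sq]
end

section
/- Suppose there exists an (ℓ, k, ε, g)-string compression scheme with ε ≤ 1/10. Then k ≥ (log g + 3ℓ/50)/log 2 − 1. In particular, for ℓ ≥ 200 there is no (ℓ, k, 1/10, 1/2)-SCS with k < ℓ/20. -/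
lemma scs_fiber_card_le (ℓ k : ℕ) (ε : ℝ) (hε : ε ≤ 1 / 10)
    (Encode : (Fin ℓ → Bool) → (Fin k → Bool))
    (Decode : (Fin k → Bool) → Finset (Fin ℓ) → ℕ)
    (G : Finset (Fin ℓ → Bool))
    (hcorrect : ∀ s ∈ G, ∀ q : Finset (Fin ℓ),
      |(Decode (Encode s) q : ℝ) - ((q.filter fun i => s i = true).card : ℝ)| ≤ ε * ℓ / 2)
    (v : Fin k → Bool) :
    (G.filter fun s => Encode s = v).card ≤ ∑ i ∈ Finset.range (ℓ / 5 + 1), ℓ.choose i := by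
  set F := G.filter fun s => Encode s = v with hF
  rcases F.eq_empty_or_nonempty with h | ⟨s₀, hs₀⟩
  · simp [h]
  have hs₀G : s₀ ∈ G := (Finset.mem_filter.mp hs₀).1
  have hs₀v : Encode s₀ = v := (Finset.mem_filter.mp hs₀).2
  -- one-sided difference bound
  have key : ∀ u ∈ F, ∀ t ∈ F, ∀ q : Finset (Fin ℓ),
      (∀ i ∈ q, u i = true ∧ t i = false) → 10 * q.card ≤ ℓ := by
    intro u hu t ht q hq
    have huG : u ∈ G := (Finset.mem_filter.mp hu).1
    have huv : Encode u = v := (Finset.mem_filter.mp hu).2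
    have htG : t ∈ G := (Finset.mem_filter.mp ht).1
    have htv : Encode t = v := (Finset.mem_filter.mp ht).2
    have h1 : (q.filter fun i => u i = true) = q :=
      Finset.filter_eq_self.mpr fun i hi => (hq i hi).1
    have h2 : (q.filter fun i => t i = true) = ∅ :=
      Finset.filter_eq_empty_iff.mpr fun i hi => by simp [(hq i hi).2]
    have e1 := hcorrect u huG q
    have e2 := hcorrect t htG q
    rw [huv, h1] at e1
    rw [htv, h2] at e2
    simp only [Finset.card_empty, Nat.cast_zero, sub_zero] at e2
    have hq1 : (q.card : ℝ) ≤ ε * ℓ := by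
      have := abs_le.mp e1
      have := abs_le.mp e2
      linarith [this.1, this.2]
    have hℓ : (0:ℝ) ≤ (ℓ:ℝ) := Nat.cast_nonneg _
    have : (10 * q.card : ℝ) ≤ ℓ := by
      have : ε * ℓ ≤ ℓ / 10 := by nlinarith
      linarith
    exact_mod_cast this
  -- each element of F differs from s₀ in at most ℓ/5 coordinates
  set ι : (Fin ℓ → Bool) → Finset (Fin ℓ) := fun t => Finset.univ.filter fun i => s₀ i ≠ t i with hι
  have hcard : ∀ t ∈ F, (ι t).card ≤ ℓ / 5 := by
    intro t ht
    set q1 : Finset (Fin ℓ) := Finset.univ.filter fun i => s₀ i = true ∧ t i = false with hq1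
    set q2 : Finset (Fin ℓ) := Finset.univ.filter fun i => t i = true ∧ s₀ i = false with hq2
    have b1 : 10 * q1.card ≤ ℓ := key s₀ hs₀ t ht q1 fun i hi => by
      simpa [hq1] using (Finset.mem_filter.mp hi).2
    have b2 : 10 * q2.card ≤ ℓ := key t ht s₀ hs₀ q2 fun i hi => by
      simpa [hq2] using (Finset.mem_filter.mp hi).2
    have hsub : ι t ⊆ q1 ∪ q2 := by
      intro i hi
      have hne : s₀ i ≠ t i := (Finset.mem_filter.mp hi).2
      rcases Bool.eq_false_or_eq_true (s₀ i) with h | h <;>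
        rcases Bool.eq_false_or_eq_true (t i) with h' | h' <;>
          simp [hq1, hq2, Finset.mem_union, Finset.mem_filter, h, h'] at hne ⊢
    have := Finset.card_le_card hsub
    have := Finset.card_union_le q1 q2
    omega
  -- injectivity
  have hinj : Set.InjOn ι F := by
    intro t ht t' ht' h
    funext i
    by_cases hi : s₀ i = t i
    · have : i ∉ ι t := by simp [hι, hi]
      rw [h] at this
      have : ¬ s₀ i ≠ t' i := by simpa [hι] using this
      rw [← hi, not_not.mp this]
    · have : i ∈ ι t := by simp [hι, hi]
      rw [h] at this
      have hi' : s₀ i ≠ t' i := by simpa [hι] using this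
      revert hi hi'
      cases s₀ i <;> cases t i <;> cases t' i <;> simp
  -- count via subsets of size ≤ ℓ/5
  set K : Finset (Finset (Fin ℓ)) :=
    (Finset.range (ℓ / 5 + 1)).biUnion fun i => Finset.powersetCard i Finset.univ with hK
  have hmaps : ∀ t ∈ F, ι t ∈ K := by
    intro t ht
    rw [hK, Finset.mem_biUnion]
    exact ⟨(ι t).card, Finset.mem_range.mpr (Nat.lt_succ_of_le (hcard t ht)),
      Finset.mem_powersetCard.mpr ⟨Finset.subset_univ _, rfl⟩⟩
  have h1 : F.card ≤ K.card := Finset.card_le_card_of_injOn ι hmaps hinj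
  have h2 : K.card = ∑ i ∈ Finset.range (ℓ / 5 + 1), ℓ.choose i := by
    rw [hK, Finset.card_biUnion]
    · refine Finset.sum_congr rfl fun i _ => ?_
      rw [Finset.card_powersetCard, Finset.card_univ, Fintype.card_fin]
    · intro i _ j _ hij
      simp only [Finset.disjoint_left]
      intro A hA hA'
      exact hij ((Finset.mem_powersetCard.mp hA).2.symm.trans (Finset.mem_powersetCard.mp hA').2)
  omega


-- ball size bound
lemma scs_ball_bound (ℓ : ℕ) :
    ((∑ i ∈ Finset.range (ℓ / 5 + 1), ℓ.choose i : ℕ) : ℝ) ≤ (5/4 : ℝ) ^ ℓ * 4 ^ (ℓ / 5) := by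
  set r := ℓ / 5 with hr
  have hrℓ : r ≤ ℓ := Nat.div_le_self _ _
  have h0 : (∑ i ∈ Finset.range (r + 1), (ℓ.choose i : ℝ)) * (1/4 : ℝ) ^ r ≤ (5/4 : ℝ) ^ ℓ := by
    rw [Finset.sum_mul]
    have step1 : ∑ i ∈ Finset.range (r + 1), (ℓ.choose i : ℝ) * (1/4) ^ r ≤
        ∑ i ∈ Finset.range (r + 1), (ℓ.choose i : ℝ) * (1/4) ^ i := by
      refine Finset.sum_le_sum fun i hi => ?_
      have hi' : i ≤ r := Nat.lt_succ_iff.mp (Finset.mem_range.mp hi)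
      have : ((1:ℝ)/4) ^ r ≤ (1/4) ^ i := by
        apply pow_le_pow_of_le_one (by norm_num) (by norm_num) hi'
      exact mul_le_mul_of_nonneg_left this (Nat.cast_nonneg _)
    have step2 : ∑ i ∈ Finset.range (r + 1), (ℓ.choose i : ℝ) * (1/4) ^ i ≤
        ∑ i ∈ Finset.range (ℓ + 1), (ℓ.choose i : ℝ) * (1/4) ^ i := by
      apply Finset.sum_le_sum_of_subset_of_nonneg
      · exact Finset.range_subset_range.mpr (by omega)
      · intro i _ _; positivity
    have step3 : ∑ i ∈ Finset.range (ℓ + 1), (ℓ.choose i : ℝ) * (1/4) ^ i = (5/4 : ℝ) ^ ℓ := by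
      have := add_pow (1/4 : ℝ) 1 ℓ
      simp only [one_pow, mul_one] at this
      rw [show (5/4 : ℝ) = 1/4 + 1 by norm_num, this]
      refine Finset.sum_congr rfl fun i _ => ?_
      ring
    linarith
  have h4 : (0:ℝ) < (1/4 : ℝ) ^ r := by positivity
  push_cast
  calc (∑ i ∈ Finset.range (r + 1), (ℓ.choose i : ℝ))
      = (∑ i ∈ Finset.range (r + 1), (ℓ.choose i : ℝ)) * (1/4) ^ r * 4 ^ r := by
        rw [mul_assoc, ← mul_pow]; norm_num
    _ ≤ (5/4 : ℝ) ^ ℓ * 4 ^ r := by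
        apply mul_le_mul_of_nonneg_right h0 (by positivity)

-- log arithmetic
lemma scs_log_bound (ℓ k : ℕ) (g : ℝ) (hg : 0 < g)
    (h : g * 2 ^ ℓ ≤ (2:ℝ) ^ k * ((5/4 : ℝ) ^ ℓ * 4 ^ (ℓ / 5))) :
    Real.log g + 3 * ℓ / 50 ≤ k * Real.log 2 := by
  set r := ℓ / 5 with hrdef
  have hrn : 5 * r ≤ ℓ := by omega
  have hr : (r : ℝ) ≤ (ℓ : ℝ) / 5 := by
    have : ((5 * r : ℕ) : ℝ) ≤ (ℓ : ℝ) := Nat.cast_le.mpr hrn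
    push_cast at this
    linarith
  have hlog := Real.log_le_log (by positivity) h
  rw [Real.log_mul (ne_of_gt hg) (by positivity), Real.log_mul (by positivity) (by positivity),
    Real.log_mul (by positivity) (by positivity), Real.log_pow, Real.log_pow, Real.log_pow, Real.log_pow] at hlog
  have h4 : Real.log 4 = 2 * Real.log 2 := by
    rw [show (4:ℝ) = 2 ^ 2 by norm_num, Real.log_pow]
    push_cast; ring
  have h54 : Real.log (5/4) = Real.log 5 - 2 * Real.log 2 := by
    rw [Real.log_div (by norm_num) (by norm_num), h4]
  have h5 : 5 * Real.log 5 ≤ 12 * Real.log 2 := by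
    have h1 : ((5:ℝ) ^ 5) ≤ (2:ℝ) ^ 12 := by norm_num
    have := Real.log_le_log (by positivity) h1
    rw [Real.log_pow, Real.log_pow] at this
    push_cast at this
    linarith
  have h2 : (0.6931471803 : ℝ) < Real.log 2 := Real.log_two_gt_d9
  rw [h4, h54] at hlog
  have hℓ : (0:ℝ) ≤ (ℓ:ℝ) := Nat.cast_nonneg _
  have hr0 : (0:ℝ) ≤ (r:ℝ) := Nat.cast_nonneg _
  have hlog2pos : (0:ℝ) ≤ 2 * Real.log 2 := by linarith
  nlinarith [mul_le_mul_of_nonneg_left hr hlog2pos]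


/-- Lower bound on the bit complexity `k` of any `(ℓ, k, ε, g)`-string compression scheme
with `ε ≤ 1/10`; in particular for `ℓ ≥ 200` there is no `(ℓ, k, 1/10, 1/2)`-SCS with
`k < ℓ/20`. -/
theorem stmt_6 (ℓ k : ℕ) (ε g : ℝ) (hg : 0 < g)
    (Encode : (Fin ℓ → Bool) → (Fin k → Bool))
    (Decode : (Fin k → Bool) → Finset (Fin ℓ) → ℕ)
    (G : Finset (Fin ℓ → Bool))
    (hG : (g * 2 ^ ℓ : ℝ) ≤ G.card)
    (hcorrect : ∀ s ∈ G, ∀ q : Finset (Fin ℓ),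
      |(Decode (Encode s) q : ℝ) - ((q.filter fun i => s i = true).card : ℝ)| ≤ ε * ℓ / 2)
    (hε : ε ≤ 1 / 10) :
    (Real.log g + 3 * ℓ / 50) / Real.log 2 - 1 ≤ (k : ℝ) ∧
      (200 ≤ ℓ → ε = 1 / 10 → g = 1 / 2 → (ℓ : ℝ) / 20 ≤ (k : ℝ)) := by
  -- counting: G.card ≤ 2^k * ball size
  set N := ∑ i ∈ Finset.range (ℓ / 5 + 1), ℓ.choose i with hN
  have hcount : G.card ≤ 2 ^ k * N := by
    have heq : G.card = ∑ v ∈ (Finset.univ : Finset (Fin k → Bool)),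
        (G.filter fun s => Encode s = v).card :=
      Finset.card_eq_sum_card_fiberwise fun x _ => Finset.mem_univ _
    rw [heq]
    calc ∑ v ∈ (Finset.univ : Finset (Fin k → Bool)), (G.filter fun s => Encode s = v).card
        ≤ ∑ _v ∈ (Finset.univ : Finset (Fin k → Bool)), N :=
          Finset.sum_le_sum fun v _ =>
            scs_fiber_card_le ℓ k ε hε Encode Decode G hcorrect v
      _ = 2 ^ k * N := by
          rw [Finset.sum_const, Finset.card_univ]
          simp [mul_comm]
  have hreal : g * 2 ^ ℓ ≤ (2:ℝ) ^ k * ((5/4 : ℝ) ^ ℓ * 4 ^ (ℓ / 5)) := by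
    calc g * 2 ^ ℓ ≤ (G.card : ℝ) := hG
      _ ≤ ((2 ^ k * N : ℕ) : ℝ) := Nat.cast_le.mpr hcount
      _ = (2:ℝ) ^ k * (N : ℝ) := by push_cast; ring
      _ ≤ (2:ℝ) ^ k * ((5/4 : ℝ) ^ ℓ * 4 ^ (ℓ / 5)) := by
          apply mul_le_mul_of_nonneg_left (scs_ball_bound ℓ) (by positivity)
  have hmain := scs_log_bound ℓ k g hg hreal
  have h2 : (0.6931471803 : ℝ) < Real.log 2 := Real.log_two_gt_d9
  have h2' : Real.log 2 < 0.6931471808 := Real.log_two_lt_d9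
  constructor
  · rw [div_sub_one (by linarith), div_le_iff₀ (by linarith)]
    nlinarith [Nat.cast_nonneg (α := ℝ) k]
  · intro hℓ200 _ hg2
    have hℓ : (200 : ℝ) ≤ (ℓ : ℝ) := by exact_mod_cast hℓ200
    rw [hg2, show (1/2 : ℝ) = 2⁻¹ by norm_num, Real.log_inv] at hmain
    nlinarith
end

section
/- Let X₁, …, X_n be independent random variables taking values in [0, a], let S = Σᵢ Xᵢ. Then for every δ ∈ [0,1] and α > 0, P[|S − E[S]| ≥ δ·E[S] + α] ≤ 2·exp(−δα/(3a)). -/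
open MeasureTheory ProbabilityTheory


section Aux

lemma aux_integrable_of_bdd {Ω : Type*} [MeasurableSpace Ω] (μ : Measure Ω)
    [IsProbabilityMeasure μ] {f : Ω → ℝ} (hf : Measurable f) (C : ℝ)
    (h : ∀ ω, |f ω| ≤ C) : Integrable f μ :=
  (integrable_const C).mono' hf.aestronglyMeasurable (ae_of_all _ h)

lemma aux_int_exp {Ω : Type*} [MeasurableSpace Ω] (μ : Measure Ω) [IsProbabilityMeasure μ]
    {a : ℝ} {Y : Ω → ℝ} (hmeas : Measurable Y)
    (hbdd : ∀ ω, Y ω ∈ Set.Icc 0 a) (t : ℝ) :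
    Integrable (fun ω => Real.exp (t * Y ω)) μ := by
  refine aux_integrable_of_bdd μ (hmeas.const_mul t).exp (Real.exp (|t| * a)) (fun ω => ?_)
  rw [abs_of_pos (Real.exp_pos _), Real.exp_le_exp]
  calc t * Y ω ≤ |t * Y ω| := le_abs_self _
    _ = |t| * |Y ω| := abs_mul t _
    _ ≤ |t| * a := by
        apply mul_le_mul_of_nonneg_left _ (abs_nonneg t)
        rw [abs_of_nonneg (hbdd ω).1]; exact (hbdd ω).2

end Aux


lemma aux_log_ineq (x : ℝ) (hx : 0 ≤ x) : 2*x/(2+x) ≤ Real.log (1+x) := by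
  set f : ℝ → ℝ := fun z => Real.log (1+z) - 2*z/(2+z) with hf
  have hderiv : ∀ y : ℝ, 0 ≤ y → HasDerivAt f ((1+y)⁻¹ - 4/(2+y)^2) y := by
    intro y hy
    have h1 : (1:ℝ) + y ≠ 0 := by linarith
    have h2 : (2:ℝ) + y ≠ 0 := by linarith
    have hlog : HasDerivAt (fun z : ℝ => Real.log (1+z)) ((1+y)⁻¹) y := by
      have := ((hasDerivAt_id y).const_add (1:ℝ)).log h1
      simpa using this
    have hq : HasDerivAt (fun z : ℝ => 2*z/(2+z)) (4/(2+y)^2) y := by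
      have hnum : HasDerivAt (fun z : ℝ => 2*z) 2 y := by
        simpa using (hasDerivAt_id y).const_mul (2:ℝ)
      have hden : HasDerivAt (fun z : ℝ => 2+z) 1 y := by
        simpa using (hasDerivAt_id y).const_add (2:ℝ)
      have : HasDerivAt (fun z : ℝ => 2*z/(2+z)) ((2 * (2 + y) - 2 * y * 1) / (2 + y) ^ 2) y :=
        hnum.div hden h2
      convert this using 1
      field_simp
      ring
    exact hlog.sub hq
  have hmono : MonotoneOn f (Set.Ici 0) := by
    apply monotoneOn_of_deriv_nonneg (convex_Ici 0)
    · exact fun y hy => (hderiv y hy).continuousAt.continuousWithinAt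
    · rw [interior_Ici]
      exact fun y hy => (hderiv y (le_of_lt hy)).differentiableAt.differentiableWithinAt
    · rw [interior_Ici]
      intro y hy
      have hy' : (0:ℝ) < y := hy
      rw [(hderiv y hy'.le).deriv]
      rw [sub_nonneg, div_le_iff₀ (by nlinarith : (0:ℝ) < (2+y)^2), inv_mul_eq_div,
        le_div_iff₀ (by linarith : (0:ℝ) < 1+y)]
      nlinarith
  have h0 : f 0 = 0 := by simp [hf]
  have := hmono (Set.self_mem_Ici) (hx : x ∈ Set.Ici 0) hx
  rw [h0] at this
  simpa [hf, sub_nonneg] using this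

lemma aux_exp_neg_le (u : ℝ) (hu : 0 ≤ u) : Real.exp (-u) ≤ 1 - u + u^2/2 := by
  set f : ℝ → ℝ := fun z => 1 - z + z^2/2 - Real.exp (-z) with hf
  have hderiv : ∀ y : ℝ, HasDerivAt f (-1 + y + Real.exp (-y)) y := by
    intro y
    have h1 : HasDerivAt (fun z : ℝ => 1 - z + z^2/2) (-1 + y) y := by
      have := ((hasDerivAt_pow 2 y).div_const 2)
      have h2 : HasDerivAt (fun z : ℝ => 1 - z + z^2/2) (-1 + ((2:ℕ):ℝ) * y ^ (2 - 1) / 2) y :=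
        ((hasDerivAt_id y).const_sub (1:ℝ)).add this
      convert h2 using 1
      ring
    have h3 : HasDerivAt (fun z : ℝ => Real.exp (-z)) (-Real.exp (-y)) y := by
      have := (hasDerivAt_id y).neg.exp
      simpa using this
    have : HasDerivAt f (-1 + y - -Real.exp (-y)) y := h1.sub h3
    convert this using 1
    ring
  have hmono : MonotoneOn f (Set.Ici 0) := by
    apply monotoneOn_of_deriv_nonneg (convex_Ici 0)
    · exact fun y _ => (hderiv y).continuousAt.continuousWithinAt
    · exact fun y _ => (hderiv y).differentiableAt.differentiableWithinAt
    · intro y hy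
      rw [(hderiv y).deriv]
      have := Real.add_one_le_exp (-y)
      linarith
  have h0 : f 0 = 0 := by simp [hf]
  have := hmono (Set.self_mem_Ici) (hu : u ∈ Set.Ici 0) hu
  rw [h0] at this
  simp only [hf] at this
  linarith

lemma aux_mgf_le {Ω : Type*} [MeasurableSpace Ω] (μ : Measure Ω) [IsProbabilityMeasure μ]
    {a : ℝ} (ha : 0 < a) {Y : Ω → ℝ} (hmeas : Measurable Y)
    (hbdd : ∀ ω, Y ω ∈ Set.Icc 0 a) (t : ℝ) :
    mgf Y μ t ≤ Real.exp ((Real.exp (t*a) - 1) * (∫ ω, Y ω ∂μ) / a) := by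
  have hYint : Integrable Y μ :=
    aux_integrable_of_bdd μ hmeas a (fun ω => abs_le.2 ⟨by linarith [(hbdd ω).1], (hbdd ω).2⟩)
  have hpt : ∀ ω, Real.exp (t * Y ω) ≤ 1 + (Real.exp (t*a) - 1) / a * Y ω := by
    intro ω
    obtain ⟨h0, h1⟩ := hbdd ω
    set x := Y ω
    have hb : 0 ≤ 1 - x/a := by
      rw [sub_nonneg, div_le_one ha]; exact h1
    have hc : 0 ≤ x/a := div_nonneg h0 ha.le
    have habc : (1 - x/a) + x/a = 1 := by ring
    have := convexOn_exp.2 (Set.mem_univ (0:ℝ)) (Set.mem_univ (t*a)) hb hc habc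
    simp only [smul_eq_mul, mul_zero, zero_add, Real.exp_zero, mul_one] at this
    have harg : x/a * (t*a) = t * x := by field_simp
    rw [harg] at this
    calc Real.exp (t*x) ≤ (1 - x/a) + x/a * Real.exp (t*a) := this
      _ = 1 + (Real.exp (t*a) - 1)/a * x := by field_simp; ring
  have hint_exp : Integrable (fun ω => Real.exp (t * Y ω)) μ := by
    refine aux_integrable_of_bdd μ (hmeas.const_mul t).exp (Real.exp (|t| * a)) (fun ω => ?_)
    rw [abs_of_pos (Real.exp_pos _), Real.exp_le_exp]
    calc t * Y ω ≤ |t * Y ω| := le_abs_self _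
      _ = |t| * |Y ω| := abs_mul t _
      _ ≤ |t| * a := by
          apply mul_le_mul_of_nonneg_left _ (abs_nonneg t)
          rw [abs_of_nonneg (hbdd ω).1]; exact (hbdd ω).2
  have hle : mgf Y μ t ≤ 1 + (Real.exp (t*a) - 1)/a * ∫ ω, Y ω ∂μ := by
    rw [mgf]
    calc ∫ ω, Real.exp (t * Y ω) ∂μ
        ≤ ∫ ω, (1 + (Real.exp (t*a) - 1)/a * Y ω) ∂μ := by
          apply integral_mono hint_exp ((integrable_const 1).add (hYint.const_mul _)) hpt
      _ = 1 + (Real.exp (t*a) - 1)/a * ∫ ω, Y ω ∂μ := by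
          rw [integral_add (integrable_const 1) (hYint.const_mul _), integral_const,
            integral_const_mul]
          simp
  refine hle.trans ?_
  have := Real.add_one_le_exp ((Real.exp (t*a) - 1)/a * ∫ ω, Y ω ∂μ)
  calc 1 + (Real.exp (t*a) - 1)/a * ∫ ω, Y ω ∂μ
      ≤ Real.exp ((Real.exp (t*a) - 1)/a * ∫ ω, Y ω ∂μ) := by linarith
    _ = Real.exp ((Real.exp (t*a) - 1) * (∫ ω, Y ω ∂μ) / a) := by ring_nf

set_option maxHeartbeats 1000000 in
/-- Additive-multiplicative Chernoff bound: for independent random variables `X i` with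
values in `[0, a]` and `S = ∑ i, X i`, for `δ ∈ [0,1]` and `α > 0`,
`P[|S − E S| ≥ δ E S + α] ≤ 2 exp(−δα/(3a))`. -/
theorem stmt_8 {Ω : Type*} [MeasurableSpace Ω] (μ : Measure Ω) [IsProbabilityMeasure μ]
    (n : ℕ) (a : ℝ) (ha : 0 < a) (X : Fin n → Ω → ℝ)
    (hmeas : ∀ i, Measurable (X i))
    (hindep : iIndepFun X μ)
    (hbdd : ∀ i, ∀ ω, X i ω ∈ Set.Icc 0 a)
    (δ α : ℝ) (hδ : δ ∈ Set.Icc (0 : ℝ) 1) (hα : 0 < α) :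
    μ {ω | δ * (∫ ω', ∑ i, X i ω' ∂μ) + α ≤
        |(∑ i, X i ω) - ∫ ω', ∑ i, X i ω' ∂μ|} ≤
      ENNReal.ofReal (2 * Real.exp (-(δ * α) / (3 * a))) := by
  obtain ⟨hδ0, hδ1⟩ := hδ
  have hXint : ∀ i, Integrable (X i) μ := fun i =>
    aux_integrable_of_bdd μ (hmeas i) a
      (fun ω => abs_le.2 ⟨by linarith [(hbdd i ω).1], (hbdd i ω).2⟩)
  have hm : (∫ ω', ∑ i, X i ω' ∂μ) = ∑ i, ∫ ω, X i ω ∂μ :=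
    integral_finset_sum _ (fun i _ => hXint i)
  rw [hm]
  set m := ∑ i, ∫ ω, X i ω ∂μ with hmdef
  have hm0 : 0 ≤ m :=
    Finset.sum_nonneg fun i _ => integral_nonneg (fun ω => (hbdd i ω).1)
  clear_value m
  rcases eq_or_lt_of_le hm0 with hm_eq | hm_pos
  · -- degenerate case m = 0 : all X i vanish a.e.
    have hzero : ∀ i, ∀ᵐ ω ∂μ, X i ω = 0 := by
      intro i
      have hi0 : ∫ ω, X i ω ∂μ = 0 := by
        have hsum0 : ∑ i, ∫ ω, X i ω ∂μ = 0 := by rw [← hmdef]; exact hm_eq.symm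
        have := (Finset.sum_eq_zero_iff_of_nonneg
          (fun i _ => integral_nonneg (fun ω => (hbdd i ω).1))).1 hsum0
        exact this i (Finset.mem_univ i)
      have := (integral_eq_zero_iff_of_nonneg (fun ω => (hbdd i ω).1) (hXint i)).1 hi0
      filter_upwards [this] with ω hω using hω
    have hSae : ∀ᵐ ω ∂μ, ∑ i, X i ω = 0 := by
      have := ae_all_iff.2 hzero
      filter_upwards [this] with ω hω
      exact Finset.sum_eq_zero fun i _ => hω i
    have hnull : μ {ω | δ * m + α ≤ |(∑ i, X i ω) - m|} = 0 := by
      refine measure_mono_null (t := {ω | ¬ (∑ i, X i ω = 0)}) ?_ (ae_iff.1 hSae)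
      intro ω hω
      simp only [Set.mem_setOf_eq] at hω ⊢
      intro h0
      rw [h0, ← hm_eq] at hω
      simp only [zero_sub, abs_neg, abs_zero, mul_zero, zero_add] at hω
      linarith
    rw [hnull]; exact bot_le
  · -- main case m > 0
    set ε := δ + α / m with hεdef
    have hε : 0 < ε := add_pos_of_nonneg_of_pos hδ0 (div_pos hα hm_pos)
    have hc : δ * m + α = ε * m := by rw [hεdef, add_mul, div_mul_cancel₀ _ hm_pos.ne']
    have hεm : ε * m = δ * m + α := hc.symm
    clear_value ε
    -- the common bound
    set B := Real.exp (-(δ * α) / (3 * a)) with hBdef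
    clear_value B
    -- integrability of exp(t * S)
    have hSint : ∀ t : ℝ, Integrable (fun ω => Real.exp (t * (∑ i, X i) ω)) μ := fun t =>
      hindep.integrable_exp_mul_sum hmeas (fun i _ => aux_int_exp μ (hmeas i) (hbdd i) t)
    -- mgf bound for the sum
    have hmgf : ∀ t : ℝ, mgf (∑ i, X i) μ t ≤ Real.exp ((Real.exp (t*a) - 1) * m / a) := by
      intro t
      rw [hindep.mgf_sum hmeas Finset.univ]
      calc ∏ i, mgf (X i) μ t
          ≤ ∏ i, Real.exp ((Real.exp (t*a) - 1) * (∫ ω, X i ω ∂μ) / a) :=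
            Finset.prod_le_prod (fun i _ => mgf_nonneg)
              (fun i _ => aux_mgf_le μ ha (hmeas i) (hbdd i) t)
        _ = Real.exp (∑ i, (Real.exp (t*a) - 1) * (∫ ω, X i ω ∂μ) / a) :=
            (Real.exp_sum _ _).symm
        _ = Real.exp ((Real.exp (t*a) - 1) * m / a) := by
            rw [← Finset.sum_div, ← Finset.mul_sum, ← hmdef]
    -- upper tail
    have hup : (μ {ω | (1+ε) * m ≤ ∑ i, X i ω}).toReal ≤ B := by
      set t₁ := Real.log (1+ε) / a with ht₁def
      have ht₁ : 0 ≤ t₁ := div_nonneg (Real.log_nonneg (by linarith)) ha.le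
      have hexp_ta : Real.exp (t₁ * a) = 1 + ε := by
        rw [ht₁def, div_mul_cancel₀ _ ha.ne', Real.exp_log (by linarith)]
      clear_value t₁
      have hchern := measure_ge_le_exp_mul_mgf (μ := μ) (X := ∑ i, X i)
        ((1+ε) * m) ht₁ (hSint t₁)
      simp only [Finset.sum_apply] at hchern
      refine hchern.trans ?_
      calc Real.exp (-t₁ * ((1+ε)*m)) * mgf (∑ i, X i) μ t₁
          ≤ Real.exp (-t₁ * ((1+ε)*m)) * Real.exp ((Real.exp (t₁*a) - 1) * m / a) := by
            exact mul_le_mul_of_nonneg_left (hmgf t₁) (Real.exp_pos _).le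
        _ = Real.exp (-t₁ * ((1+ε)*m) + (Real.exp (t₁*a) - 1) * m / a) :=
            (Real.exp_add _ _).symm
        _ ≤ B := by
            rw [hBdef, Real.exp_le_exp, hexp_ta]
            have hL := aux_log_ineq ε hε.le
            set L := Real.log (1+ε) with hLdef
            clear_value L
            have h2ε : (0:ℝ) < 2 + ε := by linarith
            have hL' : 2*ε ≤ L*(2+ε) := by rw [div_le_iff₀ h2ε] at hL; linarith
            have hms : m * ε^2 = ε * (δ*m + α) := by
              calc m * ε^2 = ε * (ε*m) := by ring
                _ = ε * (δ*m + α) := by rw [hεm]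
            have hαεm : α ≤ ε * m := by nlinarith [mul_nonneg hδ0 hm_pos.le]
            have hδαεm : δ*α ≤ δ*(ε*m) := mul_le_mul_of_nonneg_left hαεm hδ0
            have hkey : δ * α * (2+ε) ≤ 3 * (m * ε^2) := by
              nlinarith [mul_pos hε hα, mul_nonneg hδ0 (mul_pos hε hm_pos).le]
            have hmain : δ * α / 3 ≤ m * ((1+ε) * L - ε) := by
              have h1 : (m * ε^2)/(2+ε) ≤ m * ((1+ε) * L - ε) := by
                rw [div_le_iff₀ h2ε]
                nlinarith [mul_le_mul_of_nonneg_left hL'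
                  (mul_nonneg hm_pos.le (by linarith : (0:ℝ) ≤ 1+ε))]
              refine le_trans ?_ h1
              rw [div_le_div_iff₀ (by norm_num : (0:ℝ) < 3) h2ε]
              linarith
            have heq : -t₁ * ((1+ε)*m) + (1+ε-1)*m/a = (m * (ε - (1+ε)*L))/a := by
              rw [ht₁def]; field_simp; ring
            rw [heq, div_le_div_iff₀ ha (by positivity : (0:ℝ) < 3*a)]
            nlinarith [mul_le_mul_of_nonneg_right hmain ha.le]
    -- lower tail
    have hlow : (μ {ω | ∑ i, X i ω ≤ (1-ε) * m}).toReal ≤ B := by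
      set t₂ := -ε / a with ht₂def
      have ht₂ : t₂ ≤ 0 := div_nonpos_of_nonpos_of_nonneg (by linarith) ha.le
      have hexp_ta : Real.exp (t₂ * a) = Real.exp (-ε) := by
        rw [ht₂def, div_mul_cancel₀ _ ha.ne']
      clear_value t₂
      have hchern := measure_le_le_exp_mul_mgf (μ := μ) (X := ∑ i, X i)
        ((1-ε) * m) ht₂ (hSint t₂)
      simp only [Finset.sum_apply] at hchern
      refine hchern.trans ?_
      calc Real.exp (-t₂ * ((1-ε)*m)) * mgf (∑ i, X i) μ t₂
          ≤ Real.exp (-t₂ * ((1-ε)*m)) * Real.exp ((Real.exp (t₂*a) - 1) * m / a) := by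
            exact mul_le_mul_of_nonneg_left (hmgf t₂) (Real.exp_pos _).le
        _ = Real.exp (-t₂ * ((1-ε)*m) + (Real.exp (t₂*a) - 1) * m / a) :=
            (Real.exp_add _ _).symm
        _ ≤ B := by
            rw [hBdef, Real.exp_le_exp, hexp_ta]
            have hE := aux_exp_neg_le ε hε.le
            have hms : m * ε^2 = ε * (δ*m + α) := by
              calc m * ε^2 = ε * (ε*m) := by ring
                _ = ε * (δ*m + α) := by rw [hεm]
            have hαεm : α ≤ ε * m := by nlinarith [mul_nonneg hδ0 hm_pos.le]
            have hδαεm : δ*α ≤ δ*(ε*m) := mul_le_mul_of_nonneg_left hαεm hδ0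
            have hkey : 2 * (δ * α) ≤ 3 * (m * ε^2) := by
              nlinarith [mul_pos hε hα, mul_nonneg hδ0 (mul_pos hε hm_pos).le]
            have heq : -t₂ * ((1-ε)*m) + (Real.exp (-ε) - 1)*m/a =
                (ε*((1-ε)*m) + (Real.exp (-ε) - 1)*m)/a := by
              rw [ht₂def]; field_simp
            rw [heq, div_le_div_iff₀ ha (by positivity : (0:ℝ) < 3*a)]
            nlinarith [mul_le_mul_of_nonneg_right (mul_le_mul_of_nonneg_right hE hm_pos.le)
              (by positivity : (0:ℝ) ≤ 3*a), mul_le_mul_of_nonneg_right hkey ha.le]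
    -- combine
    have hsub : {ω | δ * m + α ≤ |(∑ i, X i ω) - m|} ⊆
        {ω | (1+ε) * m ≤ ∑ i, X i ω} ∪ {ω | ∑ i, X i ω ≤ (1-ε) * m} := by
      intro ω hω
      simp only [Set.mem_setOf_eq, Set.mem_union] at hω ⊢
      rw [hc] at hω
      rcases le_abs.1 hω with h | h
      · left; linarith
      · right; linarith
    calc μ {ω | δ * m + α ≤ |(∑ i, X i ω) - m|}
        ≤ μ ({ω | (1+ε) * m ≤ ∑ i, X i ω} ∪ {ω | ∑ i, X i ω ≤ (1-ε) * m}) :=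
          measure_mono hsub
      _ ≤ μ {ω | (1+ε) * m ≤ ∑ i, X i ω} + μ {ω | ∑ i, X i ω ≤ (1-ε) * m} :=
          measure_union_le _ _
      _ ≤ ENNReal.ofReal B + ENNReal.ofReal B := by
          gcongr
          · rw [← ENNReal.ofReal_toReal (measure_ne_top μ _)]
            exact ENNReal.ofReal_le_ofReal hup
          · rw [← ENNReal.ofReal_toReal (measure_ne_top μ _)]
            exact ENNReal.ofReal_le_ofReal hlow
      _ = ENNReal.ofReal (2 * B) := by
          have hB0 : 0 ≤ B := by rw [hBdef]; positivity
          rw [← ENNReal.ofReal_add hB0 hB0, two_mul]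
end
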